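/- arXiv:2008.08210 — 4 statements merged into one kernel-verified Lean document; each statement's English description precedes it below -/
import Mathlib

section
/- Let (μ₁, μ₂) be an Angelesco system. For every multi-index n = (n₁, n₂) with n₁, n₂ ≥ 1, let A_n^(1), A_n^(2) be normalized type I polynomials with deg A_n^(k) = n_k − 1 whose zeros all lie in Δ_k (k = 1, 2), and assume the nearest-neighbor recurrence hypothesis holds with coefficients a_{n,1}, a_{n,2} > 0. Let λ_{n,1} denote the coefficient of x^{n₁−1} in A_n^(1) and λ_{n,2} the coefficient of x^{n₂−1} in A_n^(2). Then for every such n one has sgn λ_{n,1} = (−1)^{n₂} and λ_{n,2} > 0. -/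
open MeasureTheory Polynomial

/-- The (topological) support of a Borel measure on `ℝ`. -/
def msupport (μ : Measure ℝ) : Set ℝ := {x | ∀ U ∈ nhds x, μ U ≠ 0}

lemma poly_integrable (μ : Measure ℝ) [IsFiniteMeasure μ] (a b : ℝ)
    (h : μ (Set.Icc a b)ᶜ = 0) (P : Polynomial ℝ) :
    Integrable (fun x => P.eval x) μ := by
  obtain ⟨M, hM⟩ := (isCompact_Icc (a := a) (b := b)).exists_bound_of_continuousOn
    (P.continuous_aeval.continuousOn)
  refine Integrable.mono' (integrable_const M) (P.continuous_aeval.aestronglyMeasurable) ?_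
  have hae : ∀ᵐ x ∂μ, x ∈ Set.Icc a b := by
    rw [ae_iff]
    convert h using 2
    rfl
  filter_upwards [hae] with x hx
  simpa using hM x hx

lemma poly_int_pos (μ : Measure ℝ) [IsFiniteMeasure μ] (a b : ℝ)
    (h : μ (Set.Icc a b)ᶜ = 0) (hinf : (msupport μ).Infinite)
    (P : Polynomial ℝ) (hP : P ≠ 0) (hpos : ∀ x ∈ Set.Icc a b, 0 ≤ P.eval x) :
    0 < ∫ x, P.eval x ∂μ := by
  have hae : ∀ᵐ x ∂μ, x ∈ Set.Icc a b := by
    rw [ae_iff]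
    convert h using 2
    rfl
  have hnn : 0 ≤ᵐ[μ] fun x => P.eval x := by
    filter_upwards [hae] with x hx using hpos x hx
  rw [integral_pos_iff_support_of_nonneg_ae hnn (poly_integrable μ a b h P)]
  rcases eq_or_lt_of_le (show 0 ≤ μ (Function.support fun x => P.eval x) from zero_le) with h0 | h0
  · exfalso
    have hsub : msupport μ ⊆ {x | P.IsRoot x} := by
      intro x hx
      by_contra hroot
      have hopen : IsOpen ((fun y => P.eval y) ⁻¹' {(0:ℝ)}ᶜ) :=
        (IsOpen.preimage P.continuous_aeval (isOpen_compl_singleton))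
      have hmem : x ∈ (fun y => P.eval y) ⁻¹' {(0:ℝ)}ᶜ := by
        simpa [Polynomial.IsRoot] using hroot
      have := hx _ (hopen.mem_nhds hmem)
      apply this
      refine measure_mono_null ?_ h0.symm
      intro y hy
      simpa [Function.support] using hy
    exact (hinf.mono hsub) (P.finite_setOf_isRoot hP)
  · exact h0

lemma multiset_neg_prod (s : Multiset ℝ) (f : ℝ → ℝ) :
    (s.map fun a => -f a).prod = (-1)^(Multiset.card s) * (s.map f).prod := by
  induction s using Multiset.induction with
  | empty => simp
  | cons a s ih => simp [ih, pow_succ]; ring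

lemma eval_eq_prod (q : Polynomial ℝ) (hcard : Multiset.card q.roots = q.natDegree) (x : ℝ) :
    q.eval x = q.leadingCoeff * (q.roots.map fun a => x - a).prod := by
  conv_lhs => rw [← Polynomial.C_leadingCoeff_mul_prod_multiset_X_sub_C hcard]
  rw [eval_mul, eval_C, eval_multiset_prod, Multiset.map_map]
  simp

lemma eval_pos_right (q : Polynomial ℝ) (hq : q ≠ 0)
    (hcard : Multiset.card q.roots = q.natDegree) {x : ℝ}
    (hx : ∀ r ∈ q.roots, r < x) : 0 < q.leadingCoeff * q.eval x := by
  rw [eval_eq_prod q hcard, ← mul_assoc]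
  apply mul_pos (mul_self_pos.mpr (Polynomial.leadingCoeff_ne_zero.mpr hq) |>.trans_eq (by ring))
  · exact Multiset.prod_pos (by
      intro y hy
      obtain ⟨r, hr, rfl⟩ := Multiset.mem_map.mp hy
      linarith [hx r hr])

lemma eval_pos_left (q : Polynomial ℝ) (hq : q ≠ 0)
    (hcard : Multiset.card q.roots = q.natDegree) {x : ℝ}
    (hx : ∀ r ∈ q.roots, x < r) :
    0 < (-1)^q.natDegree * q.leadingCoeff * q.eval x := by
  rw [eval_eq_prod q hcard]
  have : (q.roots.map fun a => x - a).prod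
      = (-1)^q.natDegree * (q.roots.map fun a => a - x).prod := by
    rw [← hcard, ← multiset_neg_prod q.roots (fun a => a - x)]
    congr 1
    apply Multiset.map_congr rfl
    intro a _; ring
  rw [this]
  have h1 : ((-1:ℝ)^q.natDegree * q.leadingCoeff) *
      (q.leadingCoeff * ((-1)^q.natDegree * (q.roots.map fun a => a - x).prod))
      = ((-1:ℝ)^q.natDegree)^2 * q.leadingCoeff^2 * (q.roots.map fun a => a - x).prod := by
    ring
  rw [h1]
  have h2 : ((-1:ℝ)^q.natDegree)^2 = 1 := by
    rw [← pow_mul, mul_comm, pow_mul]; norm_num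
  rw [h2, one_mul]
  apply mul_pos (pow_pos (abs_pos.mpr (Polynomial.leadingCoeff_ne_zero.mpr hq)) 2 |>.trans_eq
    (by rw [sq_abs]))
  exact Multiset.prod_pos (by
    intro y hy
    obtain ⟨r, hr, rfl⟩ := Multiset.mem_map.mp hy
    linarith [hx r hr])

lemma mono_integrable (μ : Measure ℝ) [IsFiniteMeasure μ] (a b : ℝ)
    (h : μ (Set.Icc a b)ᶜ = 0) (P : Polynomial ℝ) (m : ℕ) :
    Integrable (fun x => x ^ m * P.eval x) μ := by
  have := poly_integrable μ a b h (X ^ m * P)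
  simpa using this

lemma int_poly_sum (μ : Measure ℝ) [IsFiniteMeasure μ] (a b : ℝ)
    (h : μ (Set.Icc a b)ᶜ = 0) (P r : Polynomial ℝ) (N : ℕ) (hr : r.natDegree < N) :
    ∫ x, (r * P).eval x ∂μ
      = ∑ m ∈ Finset.range N, r.coeff m * ∫ x, x ^ m * P.eval x ∂μ := by
  have hre : ∀ x : ℝ, (r * P).eval x
      = ∑ m ∈ Finset.range N, r.coeff m * (x ^ m * P.eval x) := by
    intro x
    conv_lhs => rw [r.as_sum_range' N hr]
    rw [Finset.sum_mul, eval_finset_sum]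
    refine Finset.sum_congr rfl fun m _ => ?_
    simp [eval_monomial]; ring
  calc ∫ x, (r * P).eval x ∂μ
      = ∫ x, ∑ m ∈ Finset.range N, r.coeff m * (x ^ m * P.eval x) ∂μ := by simp_rw [hre]
    _ = ∑ m ∈ Finset.range N, ∫ x, r.coeff m * (x ^ m * P.eval x) ∂μ :=
        integral_finset_sum _ (fun m _ => (mono_integrable μ a b h P m).const_mul _)
    _ = ∑ m ∈ Finset.range N, r.coeff m * ∫ x, x ^ m * P.eval x ∂μ := by
        simp_rw [integral_const_mul]

lemma L_master (μ₁ μ₂ : Measure ℝ) [IsFiniteMeasure μ₁] [IsFiniteMeasure μ₂]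
    (a₁ b₁ a₂ b₂ : ℝ) (h1 : μ₁ (Set.Icc a₁ b₁)ᶜ = 0) (h2 : μ₂ (Set.Icc a₂ b₂)ᶜ = 0)
    (p q : Polynomial ℝ) (N : ℕ) (hN : 2 ≤ N)
    (horthN : ∀ m, m + 2 ≤ N →
      (∫ x, x ^ m * p.eval x ∂μ₁) + (∫ x, x ^ m * q.eval x ∂μ₂) = 0)
    (hnormN : (∫ x, x ^ (N - 1) * p.eval x ∂μ₁) + (∫ x, x ^ (N - 1) * q.eval x ∂μ₂) = 1)
    (r : Polynomial ℝ) (hr : r.natDegree < N) :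
    (∫ x, (r * p).eval x ∂μ₁) + (∫ x, (r * q).eval x ∂μ₂) = r.coeff (N - 1) := by
  rw [int_poly_sum μ₁ a₁ b₁ h1 p r N hr, int_poly_sum μ₂ a₂ b₂ h2 q r N hr,
    ← Finset.sum_add_distrib]
  have heach : ∀ m ∈ Finset.range N,
      r.coeff m * (∫ x, x ^ m * p.eval x ∂μ₁) + r.coeff m * (∫ x, x ^ m * q.eval x ∂μ₂)
      = if m = N - 1 then r.coeff (N - 1) else 0 := by
    intro m hm
    rw [Finset.mem_range] at hm
    by_cases hmN : m = N - 1
    · subst hmN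
      rw [← mul_add, hnormN, mul_one, if_pos rfl]
    · rw [if_neg hmN, ← mul_add, horthN m (by omega), mul_zero]
  rw [Finset.sum_congr rfl heach,
    Finset.sum_ite_eq' (Finset.range N) (N - 1) (fun _ => r.coeff (N - 1))]
  rw [if_pos (Finset.mem_range.mpr (by omega))]

lemma intC (c : ℝ) (P : Polynomial ℝ) (μ : Measure ℝ) :
    ∫ x, (C c * P).eval x ∂μ = c * ∫ x, P.eval x ∂μ := by
  simp_rw [eval_mul, eval_C]
  exact integral_const_mul c _

lemma pos_factor {a b : ℝ} (h : 0 < a * (b * b)) : 0 < a := by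
  nlinarith [mul_self_nonneg b]

lemma final_algebra (n₂ : ℕ) (l1 l2 Ia Ib Ka Kb : ℝ)
    (hσ : (-1 : ℝ) ^ n₂ = -(-1 : ℝ) ^ (n₂ - 1))
    (hIJ : Ia + Ib = 0) (hK : Ka + Kb = l1 * l2)
    (h1 : 0 < (-1 : ℝ) ^ (n₂ - 1) * l2 * Ia)
    (h2 : 0 < l1 * Ib)
    (h3 : 0 < ((-1 : ℝ) ^ n₂ * l2) * Ka)
    (h4 : 0 < l1 * Kb) :
    0 < (-1 : ℝ) ^ n₂ * l1 ∧ 0 < l2 := by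
  have hIb' : Ib = -Ia := by linarith
  rw [hIb'] at h2
  have key1 : 0 < (-1 : ℝ) ^ n₂ * (l1 * l2) * (Ia * Ia) := by
    rw [hσ]
    nlinarith [mul_pos h1 h2]
  have key2 : 0 < (-1 : ℝ) ^ n₂ * (l1 * l2) := pos_factor key1
  have key3 : 0 < ((-1 : ℝ) ^ n₂ * l2) * Kb := by
    apply pos_factor (b := l1)
    nlinarith [mul_pos key2 h4]
  have key4 : 0 < ((-1 : ℝ) ^ n₂ * l2) * (l1 * l2) := by
    have e : ((-1 : ℝ) ^ n₂ * l2) * (l1 * l2) = ((-1 : ℝ) ^ n₂ * l2) * (Ka + Kb) := by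
      rw [hK]
    rw [e, mul_add]
    exact add_pos h3 key3
  have goal1 : 0 < (-1 : ℝ) ^ n₂ * l1 := by
    apply pos_factor (b := l2)
    nlinarith [key4]
  have goal2 : 0 < l2 := by
    by_contra hcon
    push_neg at hcon
    nlinarith [mul_nonpos_of_nonneg_of_nonpos goal1.le hcon]
  exact ⟨goal1, goal2⟩

/-- For an Angelesco system, the leading coefficients `λ_{n,1}` and `λ_{n,2}` of the
normalized type I polynomials satisfy `sgn λ_{n,1} = (−1)^{n₂}` and `λ_{n,2} > 0`. -/
theorem stmt1
    (μ₁ μ₂ : Measure ℝ) [IsFiniteMeasure μ₁] [IsFiniteMeasure μ₂]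
    (α₁ β₁ α₂ β₂ : ℝ)
    (hsupp1 : μ₁ (Set.Icc α₁ β₁)ᶜ = 0) (hsupp2 : μ₂ (Set.Icc α₂ β₂)ᶜ = 0)
    (hinf1 : (msupport μ₁).Infinite) (hinf2 : (msupport μ₂).Infinite)
    (hα₁ : α₁ ∈ msupport μ₁) (hβ₁ : β₁ ∈ msupport μ₁)
    (hα₂ : α₂ ∈ msupport μ₂) (hβ₂ : β₂ ∈ msupport μ₂)
    (hsep : β₁ < α₂)
    (A1 A2 : ℕ → ℕ → Polynomial ℝ)
    (hA1zero : ∀ m, A1 0 m = 0) (hA2zero : ∀ m, A2 m 0 = 0)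
    (hdeg1 : ∀ n₁ n₂, 1 ≤ n₁ → A1 n₁ n₂ ≠ 0 ∧ (A1 n₁ n₂).natDegree = n₁ - 1)
    (hdeg2 : ∀ n₁ n₂, 1 ≤ n₂ → A2 n₁ n₂ ≠ 0 ∧ (A2 n₁ n₂).natDegree = n₂ - 1)
    (horth : ∀ n₁ n₂, 1 ≤ n₁ + n₂ → ∀ m, m + 2 ≤ n₁ + n₂ →
      (∫ x, x ^ m * (A1 n₁ n₂).eval x ∂μ₁) + (∫ x, x ^ m * (A2 n₁ n₂).eval x ∂μ₂) = 0)
    (hnorm : ∀ n₁ n₂, 1 ≤ n₁ + n₂ →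
      (∫ x, x ^ (n₁ + n₂ - 1) * (A1 n₁ n₂).eval x ∂μ₁)
        + (∫ x, x ^ (n₁ + n₂ - 1) * (A2 n₁ n₂).eval x ∂μ₂) = 1)
    (hroots1 : ∀ n₁ n₂, 1 ≤ n₁ → 1 ≤ n₂ →
      (A1 n₁ n₂).roots.card = n₁ - 1 ∧ ∀ x ∈ (A1 n₁ n₂).roots, x ∈ Set.Icc α₁ β₁)
    (hroots2 : ∀ n₁ n₂, 1 ≤ n₁ → 1 ≤ n₂ →
      (A2 n₁ n₂).roots.card = n₂ - 1 ∧ ∀ x ∈ (A2 n₁ n₂).roots, x ∈ Set.Icc α₂ β₂)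
    (c1 c2 a1 a2 : ℕ → ℕ → ℝ)
    (hapos : ∀ n₁ n₂, 1 ≤ n₁ → 1 ≤ n₂ → 0 < a1 n₁ n₂ ∧ 0 < a2 n₁ n₂)
    (hrec11 : ∀ n₁ n₂, 1 ≤ n₁ → 1 ≤ n₂ →
      X * A1 n₁ n₂ = A1 (n₁ - 1) n₂ + C (c1 n₁ n₂) * A1 n₁ n₂
        + C (a1 n₁ n₂) * A1 (n₁ + 1) n₂ + C (a2 n₁ n₂) * A1 n₁ (n₂ + 1))
    (hrec12 : ∀ n₁ n₂, 1 ≤ n₁ → 1 ≤ n₂ →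
      X * A1 n₁ n₂ = A1 n₁ (n₂ - 1) + C (c2 n₁ n₂) * A1 n₁ n₂
        + C (a1 n₁ n₂) * A1 (n₁ + 1) n₂ + C (a2 n₁ n₂) * A1 n₁ (n₂ + 1))
    (hrec21 : ∀ n₁ n₂, 1 ≤ n₁ → 1 ≤ n₂ →
      X * A2 n₁ n₂ = A2 (n₁ - 1) n₂ + C (c1 n₁ n₂) * A2 n₁ n₂
        + C (a1 n₁ n₂) * A2 (n₁ + 1) n₂ + C (a2 n₁ n₂) * A2 n₁ (n₂ + 1))
    (hrec22 : ∀ n₁ n₂, 1 ≤ n₁ → 1 ≤ n₂ →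
      X * A2 n₁ n₂ = A2 n₁ (n₂ - 1) + C (c2 n₁ n₂) * A2 n₁ n₂
        + C (a1 n₁ n₂) * A2 (n₁ + 1) n₂ + C (a2 n₁ n₂) * A2 n₁ (n₂ + 1)) :
    ∀ n₁ n₂, 1 ≤ n₁ → 1 ≤ n₂ →
      0 < (-1 : ℝ) ^ n₂ * (A1 n₁ n₂).coeff (n₁ - 1)
        ∧ 0 < (A2 n₁ n₂).coeff (n₂ - 1) := by
  intro n₁ n₂ hn₁ hn₂
  obtain ⟨hp0, hpdeg⟩ := hdeg1 n₁ n₂ hn₁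
  obtain ⟨hq0, hqdeg⟩ := hdeg2 n₁ n₂ hn₂
  obtain ⟨hpcard, hproots⟩ := hroots1 n₁ n₂ hn₁ hn₂
  obtain ⟨hqcard, hqroots⟩ := hroots2 n₁ n₂ hn₁ hn₂
  set p := A1 n₁ n₂ with hpdef
  set q := A2 n₁ n₂ with hqdef
  set N := n₁ + n₂ with hNdef
  set l1 := p.leadingCoeff with hl1def
  set l2 := q.leadingCoeff with hl2def
  have hN : 2 ≤ N := by omega
  have hl1 : l1 ≠ 0 := by rw [hl1def]; exact Polynomial.leadingCoeff_ne_zero.mpr hp0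
  have hl2 : l2 ≠ 0 := by rw [hl2def]; exact Polynomial.leadingCoeff_ne_zero.mpr hq0
  have hpcard' : Multiset.card p.roots = p.natDegree := by rw [hpdeg]; exact hpcard
  have hqcard' : Multiset.card q.roots = q.natDegree := by rw [hqdeg]; exact hqcard
  have hσ : (-1 : ℝ) ^ n₂ = -(-1 : ℝ) ^ (n₂ - 1) := by
    conv_lhs => rw [show n₂ = (n₂ - 1) + 1 by omega]
    rw [pow_succ]; ring
  have hqleft : ∀ x ∈ Set.Icc α₁ β₁, 0 < (-1 : ℝ) ^ (n₂ - 1) * l2 * q.eval x := by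
    intro x hx
    have h := eval_pos_left q hq0 hqcard' (x := x) (fun r hr => by
      have := (hqroots r hr).1
      linarith [hx.2])
    rw [hqdeg] at h
    rw [hl2def]
    exact h
  have hpright : ∀ x ∈ Set.Icc α₂ β₂, 0 < l1 * p.eval x := by
    intro x hx
    rw [hl1def]
    exact eval_pos_right p hp0 hpcard' (x := x) (fun r hr => by
      have := (hproots r hr).2
      linarith [hx.1])
  have horth' : ∀ m, m + 2 ≤ N →
      (∫ x, x ^ m * p.eval x ∂μ₁) + (∫ x, x ^ m * q.eval x ∂μ₂) = 0 :=
    fun m hm => horth n₁ n₂ (by omega) m hm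
  have hnorm' : (∫ x, x ^ (N - 1) * p.eval x ∂μ₁) + (∫ x, x ^ (N - 1) * q.eval x ∂μ₂) = 1 :=
    hnorm n₁ n₂ (by omega)
  clear_value l1 l2 p q N
  clear horth hnorm hrec11 hrec12 hrec21 hrec22 hapos hA1zero hA2zero hdeg1 hdeg2
    hroots1 hroots2
  have hL := L_master μ₁ μ₂ α₁ β₁ α₂ β₂ hsupp1 hsupp2 p q N hN horth' hnorm'
  have hr₀deg : (p * q).natDegree = (n₁ - 1) + (n₂ - 1) := by
    rw [Polynomial.natDegree_mul hp0 hq0, hpdeg, hqdeg]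
  have hIJ := hL (p * q) (by rw [hr₀deg]; omega)
  rw [Polynomial.coeff_eq_zero_of_natDegree_lt (by rw [hr₀deg]; omega)] at hIJ
  have hXC : (X - C β₁ : Polynomial ℝ) ≠ 0 := Polynomial.X_sub_C_ne_zero β₁
  have hr₁deg : (p * q * (X - C β₁)).natDegree = N - 1 := by
    rw [Polynomial.natDegree_mul (mul_ne_zero hp0 hq0) hXC,
      Polynomial.natDegree_mul hp0 hq0, Polynomial.natDegree_X_sub_C, hpdeg, hqdeg]
    omega
  have hK := hL (p * q * (X - C β₁)) (by rw [hr₁deg]; omega)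
  have hr₁coeff : (p * q * (X - C β₁)).coeff (N - 1) = l1 * l2 := by
    rw [← hr₁deg, Polynomial.coeff_natDegree, Polynomial.leadingCoeff_mul,
      Polynomial.leadingCoeff_mul, Polynomial.leadingCoeff_X_sub_C, hl1def, hl2def]
    ring
  rw [hr₁coeff] at hK
  set Ia := ∫ x, (p * q * p).eval x ∂μ₁ with hIadef
  set Ib := ∫ x, (p * q * q).eval x ∂μ₂ with hIbdef
  set Ka := ∫ x, (p * q * (X - C β₁) * p).eval x ∂μ₁ with hKadef
  set Kb := ∫ x, (p * q * (X - C β₁) * q).eval x ∂μ₂ with hKbdef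
  have h1 : 0 < (-1 : ℝ) ^ (n₂ - 1) * l2 * Ia := by
    have hpos := poly_int_pos μ₁ α₁ β₁ hsupp1 hinf1
      (C ((-1 : ℝ) ^ (n₂ - 1) * l2) * (p * q * p))
      (mul_ne_zero (Polynomial.C_ne_zero.mpr
        (mul_ne_zero (pow_ne_zero _ (by norm_num)) hl2))
        (mul_ne_zero (mul_ne_zero hp0 hq0) hp0))
      (by
        intro x hx
        have hq' := hqleft x hx
        simp only [eval_mul, eval_C]
        nlinarith [sq_nonneg (p.eval x)])
    rw [intC, ← hIadef] at hpos
    linarith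
  have h2 : 0 < l1 * Ib := by
    have hpos := poly_int_pos μ₂ α₂ β₂ hsupp2 hinf2
      (C l1 * (p * q * q))
      (mul_ne_zero (Polynomial.C_ne_zero.mpr hl1)
        (mul_ne_zero (mul_ne_zero hp0 hq0) hq0))
      (by
        intro x hx
        have hp' := hpright x hx
        simp only [eval_mul, eval_C]
        nlinarith [sq_nonneg (q.eval x)])
    rwa [intC, ← hIbdef] at hpos
  have h3 : 0 < ((-1 : ℝ) ^ n₂ * l2) * Ka := by
    have hpos := poly_int_pos μ₁ α₁ β₁ hsupp1 hinf1
      (C ((-1 : ℝ) ^ n₂ * l2) * (p * q * (X - C β₁) * p))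
      (mul_ne_zero (Polynomial.C_ne_zero.mpr
        (mul_ne_zero (pow_ne_zero _ (by norm_num)) hl2))
        (mul_ne_zero (mul_ne_zero (mul_ne_zero hp0 hq0) hXC) hp0))
      (by
        intro x hx
        have hq' := hqleft x hx
        have hxb : x ≤ β₁ := hx.2
        simp only [eval_mul, eval_C, eval_sub, eval_X]
        rw [hσ]
        nlinarith [sq_nonneg (p.eval x),
          mul_nonneg (mul_nonneg hq'.le (sub_nonneg.mpr hxb)) (sq_nonneg (p.eval x))])
    rw [intC, ← hKadef] at hpos
    linarith
  have h4 : 0 < l1 * Kb := by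
    have hpos := poly_int_pos μ₂ α₂ β₂ hsupp2 hinf2
      (C l1 * (p * q * (X - C β₁) * q))
      (mul_ne_zero (Polynomial.C_ne_zero.mpr hl1)
        (mul_ne_zero (mul_ne_zero (mul_ne_zero hp0 hq0) hXC) hq0))
      (by
        intro x hx
        have hp' := hpright x hx
        have hxb : β₁ ≤ x := le_of_lt (lt_of_lt_of_le hsep hx.1)
        simp only [eval_mul, eval_C, eval_sub, eval_X]
        nlinarith [sq_nonneg (q.eval x),
          mul_nonneg (mul_nonneg hp'.le (sub_nonneg.mpr hxb)) (sq_nonneg (q.eval x))])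
    rwa [intC, ← hKbdef] at hpos
  clear_value Ia Ib Ka Kb
  obtain ⟨goal1, goal2⟩ := final_algebra n₂ l1 l2 Ia Ib Ka Kb hσ hIJ hK h1 h2 h3 h4
  constructor
  · have hc1 : p.coeff (n₁ - 1) = l1 := by
      rw [← hpdeg, hl1def]
      exact Polynomial.coeff_natDegree
    rw [hc1]
    exact goal1
  · have hc2 : q.coeff (n₂ - 1) = l2 := by
      rw [← hqdeg, hl2def]
      exact Polynomial.coeff_natDegree
    rw [hc2]
    exact goal2
end

section
/- Let (μ₁, μ₂) be an Angelesco system with Δ₁ = [α₁, β₁] < Δ₂ = [α₂, β₂], let n₁, n₂ ≥ 1, let A₁ be a real polynomial of degree n₁ − 1 with all zeros in Δ₁ and leading coefficient of sign (−1)^{n₂}, let A₂ be a real polynomial of degree n₂ − 1 with all zeros in Δ₂ and positive leading coefficient, and assume the orthogonality conditions ∫ x^m (A₁(x) dμ₁(x) + A₂(x) dμ₂(x)) = 0 hold for all m = 0, …, n₁+n₂−2. Then the function of the second kind L(z) = ∫ (A₁(x) dμ₁(x) + A₂(x) dμ₂(x))/(z − x) has no zeros in ℂ ∖ (Δ₁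 ∪ Δ₂). -/
open MeasureTheory Polynomial

lemma msupport_subset_of_closed {μ : Measure ℝ} {S : Set ℝ} (hS : IsClosed S)
    (h : μ Sᶜ = 0) : msupport μ ⊆ S := by
  intro x hx
  by_contra hxS
  exact hx Sᶜ (hS.isOpen_compl.mem_nhds hxS) h

lemma ae_mem_Icc {μ : Measure ℝ} {a b : ℝ} (h : μ (Set.Icc a b)ᶜ = 0) :
    ∀ᵐ x ∂μ, x ∈ Set.Icc a b := by
  rw [MeasureTheory.ae_iff]
  exact h

lemma integrable_aux {E : Type*} [NormedAddCommGroup E] {μ : Measure ℝ} [IsFiniteMeasure μ]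
    {a b : ℝ} (hμ : μ (Set.Icc a b)ᶜ = 0) {f : ℝ → E}
    (hf : AEStronglyMeasurable f μ) (hc : ContinuousOn f (Set.Icc a b)) :
    Integrable f μ := by
  obtain ⟨C, hC⟩ := (isCompact_Icc (a := a) (b := b)).exists_bound_of_continuousOn hc
  refine ⟨hf, ?_⟩
  apply MeasureTheory.HasFiniteIntegral.of_bounded (C := C)
  exact (ae_mem_Icc hμ).mono fun x hx => hC x hx

lemma multiset_prod_pos {s : Multiset ℝ} (h : ∀ a ∈ s, 0 < a) : 0 < s.prod := by
  induction s using Multiset.induction_on with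
  | empty => simp
  | cons a s ih =>
    rw [Multiset.prod_cons]
    exact mul_pos (h a (Multiset.mem_cons_self a s))
      (ih fun b hb => h b (Multiset.mem_cons_of_mem hb))

lemma multiset_prod_neg {s : Multiset ℝ} (h : ∀ a ∈ s, a < 0) :
    0 < (-1 : ℝ) ^ Multiset.card s * s.prod := by
  induction s using Multiset.induction_on with
  | empty => simp
  | cons a s ih =>
    rw [Multiset.prod_cons, Multiset.card_cons, pow_succ]
    have h1 := ih fun b hb => h b (Multiset.mem_cons_of_mem hb)
    have h2 := h a (Multiset.mem_cons_self a s)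
    nlinarith

lemma div_nonneg_aux {a b d : ℝ} (ha : 0 ≤ a) (hbd : 0 ≤ b * d) (hd : d ≠ 0) :
    0 ≤ a * b / d := by
  rcases lt_or_gt_of_ne hd with hd' | hd'
  · have hb : b ≤ 0 := by nlinarith
    have : a * b ≤ 0 := mul_nonpos_of_nonneg_of_nonpos ha hb
    rw [div_nonneg_iff]
    exact Or.inr ⟨this, hd'.le⟩
  · have hb : 0 ≤ b := by nlinarith
    exact div_nonneg (mul_nonneg ha hb) hd'.le

/-- Sign of a real polynomial to the right of all of its roots. -/
lemma eval_sign_right {A : Polynomial ℝ} (hA : A ≠ 0)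
    (hcard : Multiset.card A.roots = A.natDegree) {x : ℝ}
    (hx : ∀ r ∈ A.roots, r < x) : 0 < A.leadingCoeff⁻¹ * A.eval x := by
  have hfac := Polynomial.C_leadingCoeff_mul_prod_multiset_X_sub_C (p := A) hcard
  have hev : A.eval x = A.leadingCoeff * ((A.roots.map fun r => x - r)).prod := by
    conv_lhs => rw [← hfac]
    rw [eval_mul, eval_C, eval_multiset_prod, Multiset.map_map]
    simp
  have hlc : A.leadingCoeff ≠ 0 := leadingCoeff_ne_zero.mpr hA
  have hpos : 0 < ((A.roots.map fun r => x - r)).prod := by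
    apply multiset_prod_pos
    intro a ha
    obtain ⟨r, hr, rfl⟩ := Multiset.mem_map.mp ha
    exact sub_pos.mpr (hx r hr)
  rw [hev, ← mul_assoc, inv_mul_cancel₀ hlc, one_mul]
  exact hpos

/-- Sign of a real polynomial to the left of all of its roots. -/
lemma eval_sign_left {A : Polynomial ℝ} (hA : A ≠ 0)
    (hcard : Multiset.card A.roots = A.natDegree) {x : ℝ}
    (hx : ∀ r ∈ A.roots, x < r) :
    0 < (-1 : ℝ) ^ A.natDegree * (A.leadingCoeff⁻¹ * A.eval x) := by
  have hfac := Polynomial.C_leadingCoeff_mul_prod_multiset_X_sub_C (p := A) hcard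
  have hev : A.eval x = A.leadingCoeff * ((A.roots.map fun r => x - r)).prod := by
    conv_lhs => rw [← hfac]
    rw [eval_mul, eval_C, eval_multiset_prod, Multiset.map_map]
    simp
  have hlc : A.leadingCoeff ≠ 0 := leadingCoeff_ne_zero.mpr hA
  have hpos : 0 < (-1 : ℝ) ^ A.natDegree * ((A.roots.map fun r => x - r)).prod := by
    rw [← hcard, ← Multiset.card_map (fun r => x - r) A.roots]
    apply multiset_prod_neg
    intro a ha
    obtain ⟨r, hr, rfl⟩ := Multiset.mem_map.mp ha
    exact sub_neg.mpr (hx r hr)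
  calc (0:ℝ) < (-1 : ℝ) ^ A.natDegree * ((A.roots.map fun r => x - r)).prod := hpos
    _ = (-1 : ℝ) ^ A.natDegree * (A.leadingCoeff⁻¹ * A.eval x) := by
        rw [hev]
        field_simp

set_option maxHeartbeats 4000000 in
/-- For an Angelesco system with type I data `A₁, A₂` satisfying the orthogonality
conditions, the function of the second kind `L` has no zeros in `ℂ ∖ (Δ₁ ∪ Δ₂)`. -/
theorem stmt5
    (μ₁ μ₂ : Measure ℝ) [IsFiniteMeasure μ₁] [IsFiniteMeasure μ₂]
    (α₁ β₁ α₂ β₂ : ℝ)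
    (hsupp1 : μ₁ (Set.Icc α₁ β₁)ᶜ = 0) (hsupp2 : μ₂ (Set.Icc α₂ β₂)ᶜ = 0)
    (hinf1 : (msupport μ₁).Infinite) (hinf2 : (msupport μ₂).Infinite)
    (hα₁ : α₁ ∈ msupport μ₁) (hβ₁ : β₁ ∈ msupport μ₁)
    (hα₂ : α₂ ∈ msupport μ₂) (hβ₂ : β₂ ∈ msupport μ₂)
    (hsep : β₁ < α₂)
    (n₁ n₂ : ℕ) (hn₁ : 1 ≤ n₁) (hn₂ : 1 ≤ n₂)
    (A₁ A₂ : Polynomial ℝ)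
    (hd₁ : A₁ ≠ 0 ∧ A₁.natDegree = n₁ - 1)
    (hd₂ : A₂ ≠ 0 ∧ A₂.natDegree = n₂ - 1)
    (hroots₁ : A₁.roots.card = n₁ - 1 ∧ ∀ x ∈ A₁.roots, x ∈ Set.Icc α₁ β₁)
    (hroots₂ : A₂.roots.card = n₂ - 1 ∧ ∀ x ∈ A₂.roots, x ∈ Set.Icc α₂ β₂)
    (hlead₁ : 0 < (-1 : ℝ) ^ n₂ * A₁.leadingCoeff)
    (hlead₂ : 0 < A₂.leadingCoeff)
    (horth : ∀ m, m + 2 ≤ n₁ + n₂ →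
      (∫ x, x ^ m * A₁.eval x ∂μ₁) + (∫ x, x ^ m * A₂.eval x ∂μ₂) = 0)
    (L : ℂ → ℂ)
    (hL : L = fun z => (∫ x, ((A₁.eval x : ℝ) : ℂ) / (z - (x : ℂ)) ∂μ₁)
        + ∫ x, ((A₂.eval x : ℝ) : ℂ) / (z - (x : ℂ)) ∂μ₂) :
    ∀ z : ℂ, (∀ x : ℝ, x ∈ Set.Icc α₁ β₁ ∪ Set.Icc α₂ β₂ → (x : ℂ) ≠ z) → L z ≠ 0 := by
  intro z hz hLz
  obtain ⟨m₁, rfl⟩ : ∃ m, n₁ = m + 1 := ⟨n₁ - 1, by omega⟩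
  obtain ⟨m₂, rfl⟩ : ∃ m, n₂ = m + 1 := ⟨n₂ - 1, by omega⟩
  have hA₁ne := hd₁.1
  have hA₂ne := hd₂.1
  have hab₁ : α₁ ≤ β₁ := by
    by_contra hab
    rw [Set.Icc_eq_empty hab] at hsupp1
    simp only [Set.compl_empty] at hsupp1
    exact hα₁ Set.univ Filter.univ_mem hsupp1
  have hab₂ : α₂ ≤ β₂ := by
    by_contra hab
    rw [Set.Icc_eq_empty hab] at hsupp2
    simp only [Set.compl_empty] at hsupp2
    exact hα₂ Set.univ Filter.univ_mem hsupp2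
  have hdeg₁ : A₁.natDegree = m₁ := by rw [hd₁.2]; omega
  have hdeg₂ : A₂.natDegree = m₂ := by rw [hd₂.2]; omega
  have hcard₁ : Multiset.card A₁.roots = A₁.natDegree := by rw [hroots₁.1, hdeg₁]; omega
  have hcard₂ : Multiset.card A₂.roots = A₂.natDegree := by rw [hroots₂.1, hdeg₂]; omega
  set c : ℝ := (β₁ + α₂) / 2 with hcdef
  have hc1 : β₁ < c := by rw [hcdef]; linarith
  have hc2 : c < α₂ := by rw [hcdef]; linarith
  -- sign facts
  have sgn1 : ∀ x : ℝ, α₂ ≤ x → 0 < (-1 : ℝ) ^ (m₂ + 1) * A₁.eval x := by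
    intro x hx
    have h := eval_sign_right hA₁ne hcard₁ (x := x)
      (fun r hr => lt_of_le_of_lt (hroots₁.2 r hr).2 (lt_of_lt_of_le hsep hx))
    have hlc : A₁.leadingCoeff ≠ 0 := leadingCoeff_ne_zero.mpr hA₁ne
    have key := mul_pos hlead₁ h
    have heq : (-1 : ℝ) ^ (m₂ + 1) * A₁.leadingCoeff * (A₁.leadingCoeff⁻¹ * A₁.eval x)
        = (-1 : ℝ) ^ (m₂ + 1) * A₁.eval x := by
      field_simp
    rwa [heq] at key
  have sgn2 : ∀ x : ℝ, x ≤ β₁ → 0 < (-1 : ℝ) ^ m₂ * A₂.eval x := by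
    intro x hx
    have h := eval_sign_left hA₂ne hcard₂ (x := x)
      (fun r hr => lt_of_lt_of_le (hx.trans_lt hsep) (hroots₂.2 r hr).1)
    rw [hdeg₂] at h
    have hlc : A₂.leadingCoeff ≠ 0 := leadingCoeff_ne_zero.mpr hA₂ne
    have key := mul_pos hlead₂ h
    have heq : A₂.leadingCoeff * ((-1 : ℝ) ^ m₂ * (A₂.leadingCoeff⁻¹ * A₂.eval x))
        = (-1 : ℝ) ^ m₂ * A₂.eval x := by
      field_simp
    rwa [heq] at key
  have sgn1' : ∀ x : ℝ, α₂ ≤ x → (-1 : ℝ) ^ m₂ * A₁.eval x < 0 := by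
    intro x hx
    have h := sgn1 x hx
    have he : (-1 : ℝ) ^ (m₂ + 1) * A₁.eval x = -((-1 : ℝ) ^ m₂ * A₁.eval x) := by ring
    linarith [he, h]
  have sgn2' : ∀ x : ℝ, x ≤ β₁ → (-1 : ℝ) ^ (m₂ + 1) * A₂.eval x < 0 := by
    intro x hx
    have h := sgn2 x hx
    have he : (-1 : ℝ) ^ (m₂ + 1) * A₂.eval x = -((-1 : ℝ) ^ m₂ * A₂.eval x) := by ring
    linarith [he, h]
  -- orthogonality for arbitrary polynomials of degree ≤ n₁ + n₂ - 2
  have ORTH : ∀ q : ℝ[X], q.natDegree + 2 ≤ (m₁ + 1) + (m₂ + 1) →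
      (∫ x, q.eval x * A₁.eval x ∂μ₁) + (∫ x, q.eval x * A₂.eval x ∂μ₂) = 0 := by
    intro q hq
    have expand : ∀ (A : ℝ[X]) (μ : Measure ℝ) (a b : ℝ), IsFiniteMeasure μ →
        μ (Set.Icc a b)ᶜ = 0 →
        ∫ x, q.eval x * A.eval x ∂μ
          = ∑ i ∈ Finset.range (q.natDegree + 1), q.coeff i * ∫ x, x ^ i * A.eval x ∂μ := by
      intro A μ a b hfin hμ
      have h1 : ∫ x, q.eval x * A.eval x ∂μ
          = ∫ x, ∑ i ∈ Finset.range (q.natDegree + 1), q.coeff i * (x ^ i * A.eval x) ∂μ := by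
        congr 1
        funext x
        rw [Polynomial.eval_eq_sum_range, Finset.sum_mul]
        exact Finset.sum_congr rfl fun i _ => by ring
      rw [h1, integral_finset_sum]
      · exact Finset.sum_congr rfl fun i _ => integral_const_mul _ _
      · intro i _
        exact integrable_aux hμ (Continuous.aestronglyMeasurable (by fun_prop)) (Continuous.continuousOn (by fun_prop))
    rw [expand A₁ μ₁ α₁ β₁ inferInstance hsupp1, expand A₂ μ₂ α₂ β₂ inferInstance hsupp2,
      ← Finset.sum_add_distrib]
    apply Finset.sum_eq_zero
    intro i hi
    rw [← mul_add, horth i (by have := Finset.mem_range.mp hi; omega), mul_zero]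
  -- the final contradiction machine
  have hfinal : ∀ g₁ g₂ : ℝ → ℝ, Integrable g₁ μ₁ → Integrable g₂ μ₂ →
      ((∫ x, g₁ x ∂μ₁) + (∫ x, g₂ x ∂μ₂) = 0) →
      (∀ x ∈ Set.Icc α₁ β₁, 0 ≤ g₁ x) → (∀ x ∈ Set.Icc α₂ β₂, 0 ≤ g₂ x) →
      (∀ x ∈ Set.Icc α₁ β₁, g₁ x = 0 → A₁.eval x = 0) → False := by
    intro g₁ g₂ hi₁ hi₂ hsum h₁ h₂ hz₁
    have hg₁ : 0 ≤ᵐ[μ₁] g₁ := (ae_mem_Icc hsupp1).mono fun x hx => h₁ x hx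
    have hg₂ : 0 ≤ᵐ[μ₂] g₂ := (ae_mem_Icc hsupp2).mono fun x hx => h₂ x hx
    have hI₁ : 0 ≤ ∫ x, g₁ x ∂μ₁ := integral_nonneg_of_ae hg₁
    have hI₂ : 0 ≤ ∫ x, g₂ x ∂μ₂ := integral_nonneg_of_ae hg₂
    have hI₁0 : ∫ x, g₁ x ∂μ₁ = 0 := by linarith
    have hgz : g₁ =ᵐ[μ₁] 0 := (integral_eq_zero_iff_of_nonneg_ae hg₁ hi₁).mp hI₁0
    have hnull : μ₁ {x | ¬ g₁ x = 0} = 0 := by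
      rw [Filter.EventuallyEq] at hgz
      exact hgz
    have hZ : {x : ℝ | A₁.IsRoot x}.Finite := Polynomial.finite_setOf_isRoot hA₁ne
    have hsub : {x : ℝ | A₁.IsRoot x}ᶜ ⊆ {x | ¬ g₁ x = 0} ∪ (Set.Icc α₁ β₁)ᶜ := by
      intro x hx
      by_cases hxI : x ∈ Set.Icc α₁ β₁
      · exact Or.inl fun hg => hx (hz₁ x hxI hg)
      · exact Or.inr hxI
    have hZc : μ₁ {x : ℝ | A₁.IsRoot x}ᶜ = 0 :=
      measure_mono_null hsub (measure_union_null hnull hsupp1)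
    exact hinf1 (hZ.subset (msupport_subset_of_closed hZ.isClosed hZc))
  by_cases him : z.im = 0
  · -- real pole case
    set t : ℝ := z.re with htdef
    have hzt : z = (t : ℂ) := by
      apply Complex.ext
      · simp [htdef]
      · simp [him]
    have ht₁ : t ∉ Set.Icc α₁ β₁ := fun h => hz t (Or.inl h) (by rw [hzt])
    have ht₂ : t ∉ Set.Icc α₂ β₂ := fun h => hz t (Or.inr h) (by rw [hzt])
    have hxt₁ : ∀ x ∈ Set.Icc α₁ β₁, x - t ≠ 0 :=
      fun x hx => sub_ne_zero.mpr fun h => ht₁ (h ▸ hx)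
    have hxt₂ : ∀ x ∈ Set.Icc α₂ β₂, x - t ≠ 0 :=
      fun x hx => sub_ne_zero.mpr fun h => ht₂ (h ▸ hx)
    have hsum : (∫ x, A₁.eval x / (t - x) ∂μ₁) + (∫ x, A₂.eval x / (t - x) ∂μ₂) = 0 := by
      have h0 : L z = ((∫ x, A₁.eval x / (t - x) ∂μ₁ : ℝ) : ℂ)
          + ((∫ x, A₂.eval x / (t - x) ∂μ₂ : ℝ) : ℂ) := by
        rw [hzt] at hLz ⊢
        simp only [hL]
        congr 1
        · have h : (fun x : ℝ => (↑(A₁.eval x) : ℂ) / (↑t - ↑x))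
              = fun x : ℝ => ((A₁.eval x / (t - x) : ℝ) : ℂ) := by
            funext x; push_cast; ring
          rw [h]
          exact integral_ofReal
        · have h : (fun x : ℝ => (↑(A₂.eval x) : ℂ) / (↑t - ↑x))
              = fun x : ℝ => ((A₂.eval x / (t - x) : ℝ) : ℂ) := by
            funext x; push_cast; ring
          rw [h]
          exact integral_ofReal
      have h1 : ((∫ x, A₁.eval x / (t - x) ∂μ₁ : ℝ) : ℂ)
          + ((∫ x, A₂.eval x / (t - x) ∂μ₂ : ℝ) : ℂ) = 0 := by
        rw [← h0]; exact hLz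
      exact_mod_cast h1
    -- key orthogonality with the pole divided out
    have KEYR : ∀ Q : ℝ[X], Q.natDegree + 1 ≤ (m₁ + 1) + (m₂ + 1) →
        (∫ x, Q.eval x * A₁.eval x / (x - t) ∂μ₁)
          + (∫ x, Q.eval x * A₂.eval x / (x - t) ∂μ₂) = 0 := by
      intro Q hQ
      set q : ℝ[X] := Q /ₘ (X - C t) with hqdef
      have hqd : q.natDegree + 2 ≤ (m₁ + 1) + (m₂ + 1) := by
        have hq1 : q.natDegree = Q.natDegree - 1 := by
          rw [hqdef, natDegree_divByMonic Q (monic_X_sub_C t), natDegree_X_sub_C]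
        omega
      have hQx : ∀ x : ℝ, Q.eval x = Q.eval t + (x - t) * q.eval x := by
        intro x
        conv_lhs => rw [← modByMonic_add_div Q (X - C t)]
        rw [eval_add, eval_mul, modByMonic_X_sub_C_eq_C_eval, eval_C, eval_sub, eval_X,
          eval_C, ← hqdef]
      have step : ∀ (A : ℝ[X]) (μ : Measure ℝ) (a b : ℝ), IsFiniteMeasure μ →
          μ (Set.Icc a b)ᶜ = 0 → (∀ x ∈ Set.Icc a b, x - t ≠ 0) →
          ∫ x, Q.eval x * A.eval x / (x - t) ∂μ
            = (∫ x, q.eval x * A.eval x ∂μ) + Q.eval t * ∫ x, A.eval x / (x - t) ∂μ := by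
        intro A μ a b hfin hμ hxt
        have hint1 : Integrable (fun x => q.eval x * A.eval x) μ :=
          integrable_aux hμ (Continuous.aestronglyMeasurable (by fun_prop)) (Continuous.continuousOn (by fun_prop))
        have hint2 : Integrable (fun x => A.eval x / (x - t)) μ := by
          apply integrable_aux hμ ((by fun_prop : Measurable _).aestronglyMeasurable)
          exact ContinuousOn.div (Continuous.continuousOn (by fun_prop))
            (Continuous.continuousOn (by fun_prop)) hxt
        have e2 : ∫ x, Q.eval x * A.eval x / (x - t) ∂μ
            = ∫ x, (q.eval x * A.eval x + Q.eval t * (A.eval x / (x - t))) ∂μ := by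
          apply integral_congr_ae
          filter_upwards [ae_mem_Icc hμ] with x hx
          have hx0 := hxt x hx
          rw [hQx x]
          field_simp
          ring
        rw [e2, integral_add hint1 (hint2.const_mul _), integral_const_mul]
      rw [step A₁ μ₁ α₁ β₁ inferInstance hsupp1 hxt₁,
        step A₂ μ₂ α₂ β₂ inferInstance hsupp2 hxt₂]
      have horth2 := ORTH q hqd
      have hdiv : (∫ x, A₁.eval x / (x - t) ∂μ₁) + (∫ x, A₂.eval x / (x - t) ∂μ₂) = 0 := by
        have e1 : ∀ (A : ℝ[X]) (μ : Measure ℝ),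
            (∫ x, A.eval x / (x - t) ∂μ) = - ∫ x, A.eval x / (t - x) ∂μ := by
          intro A μ
          rw [← integral_neg]
          congr 1
          funext x
          rw [show x - t = -(t - x) by ring, div_neg]
        rw [e1 A₁ μ₁, e1 A₂ μ₂, ← neg_add, hsum, neg_zero]
      linear_combination horth2 + Q.eval t * hdiv
    -- applying the machine
    have happly : ∀ Q : ℝ[X], Q.natDegree + 1 ≤ (m₁ + 1) + (m₂ + 1) →
        (∀ x ∈ Set.Icc α₁ β₁, 0 ≤ Q.eval x * A₁.eval x / (x - t)) →
        (∀ x ∈ Set.Icc α₂ β₂, 0 ≤ Q.eval x * A₂.eval x / (x - t)) →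
        (∀ x ∈ Set.Icc α₁ β₁, Q.eval x * A₁.eval x / (x - t) = 0 → A₁.eval x = 0) → False := by
      intro Q hQd hp1 hp2 hz1
      refine hfinal _ _ ?_ ?_ (KEYR Q hQd) hp1 hp2 hz1
      · apply integrable_aux hsupp1 ((by fun_prop : Measurable _).aestronglyMeasurable)
        exact ContinuousOn.div (Continuous.continuousOn (by fun_prop))
          (Continuous.continuousOn (by fun_prop)) hxt₁
      · apply integrable_aux hsupp2 ((by fun_prop : Measurable _).aestronglyMeasurable)
        exact ContinuousOn.div (Continuous.continuousOn (by fun_prop))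
          (Continuous.continuousOn (by fun_prop)) hxt₂
    have htcases : t < α₁ ∨ (β₁ < t ∧ t < α₂) ∨ β₂ < t := by
      rw [Set.mem_Icc, not_and_or, not_le, not_le] at ht₁ ht₂
      rcases ht₁ with h1 | h1
      · exact Or.inl h1
      · rcases ht₂ with h2 | h2
        · exact Or.inr (Or.inl ⟨h1, h2⟩)
        · exact Or.inr (Or.inr h2)
    have hpow : (-1 : ℝ) ^ (m₂ + 1) = -(-1 : ℝ) ^ m₂ := by ring
    have hεne : ∀ k : ℕ, ((-1 : ℝ) ^ k) ≠ 0 := fun k => pow_ne_zero k (by norm_num)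
    rcases htcases with hta | htb | htc
    · -- t < α₁
      refine happly (C ((-1 : ℝ) ^ (m₂ + 1)) * (A₁ * A₂ * (X - C c))) ?_ ?_ ?_ ?_
      · rw [natDegree_C_mul (hεne _), natDegree_mul (mul_ne_zero hA₁ne hA₂ne)
          (X_sub_C_ne_zero c), natDegree_mul hA₁ne hA₂ne, natDegree_X_sub_C, hdeg₁, hdeg₂]
        omega
      · intro x hx
        have heq : (C ((-1 : ℝ) ^ (m₂ + 1)) * (A₁ * A₂ * (X - C c))).eval x * A₁.eval x / (x - t)
            = (A₁.eval x) ^ 2 * ((-1 : ℝ) ^ (m₂ + 1) * A₂.eval x * (x - c)) / (x - t) := by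
          simp only [eval_mul, eval_C, eval_sub, eval_X]; ring
        have hok : 0 ≤ (A₁.eval x) ^ 2 * ((-1 : ℝ) ^ (m₂ + 1) * A₂.eval x * (x - c)) / (x - t) := by
          refine div_nonneg_aux (sq_nonneg _) ?_ (hxt₁ x hx)
          obtain ⟨hxa, hxb⟩ := hx
          exact le_of_lt (mul_pos (mul_pos_of_neg_of_neg (sgn2' x hxb)
            (show x - c < 0 by linarith)) (show (0:ℝ) < x - t by linarith))
        linarith [heq, hok]
      · intro x hx
        have heq : (C ((-1 : ℝ) ^ (m₂ + 1)) * (A₁ * A₂ * (X - C c))).eval x * A₂.eval x / (x - t)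
            = (A₂.eval x) ^ 2 * ((-1 : ℝ) ^ (m₂ + 1) * A₁.eval x * (x - c)) / (x - t) := by
          simp only [eval_mul, eval_C, eval_sub, eval_X]; ring
        have hok : 0 ≤ (A₂.eval x) ^ 2 * ((-1 : ℝ) ^ (m₂ + 1) * A₁.eval x * (x - c)) / (x - t) := by
          refine div_nonneg_aux (sq_nonneg _) ?_ (hxt₂ x hx)
          obtain ⟨hxa, hxb⟩ := hx
          exact le_of_lt (mul_pos (mul_pos (sgn1 x hxa)
            (show (0:ℝ) < x - c by linarith)) (show (0:ℝ) < x - t by linarith [hab₁]))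
        linarith [heq, hok]
      · intro x hx hx0
        have hd := hxt₁ x hx
        have heq : (C ((-1 : ℝ) ^ (m₂ + 1)) * (A₁ * A₂ * (X - C c))).eval x * A₁.eval x / (x - t)
            = (A₁.eval x) ^ 2 * ((-1 : ℝ) ^ (m₂ + 1) * A₂.eval x * (x - c)) / (x - t) := by
          simp only [eval_mul, eval_C, eval_sub, eval_X]; ring
        have h0 : (A₁.eval x) ^ 2 * ((-1 : ℝ) ^ (m₂ + 1) * A₂.eval x * (x - c)) / (x - t) = 0 := by
          rw [← heq]; exact hx0
        have hnum := (div_eq_zero_iff.mp h0).resolve_right hd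
        have hcx : x - c ≠ 0 := sub_ne_zero.mpr (ne_of_lt (lt_of_le_of_lt hx.2 hc1))
        have hb : ((-1 : ℝ) ^ (m₂ + 1) * A₂.eval x * (x - c)) ≠ 0 := by
          have h2 := sgn2 x hx.2
          refine mul_ne_zero (mul_ne_zero (hεne _) ?_) hcx
          intro h0
          rw [h0, mul_zero] at h2
          exact lt_irrefl 0 h2
        exact sq_eq_zero_iff.mp ((mul_eq_zero.mp hnum).resolve_right hb)
    · -- β₁ < t < α₂
      obtain ⟨htb1, htb2⟩ := htb
      refine happly (C ((-1 : ℝ) ^ (m₂ + 1)) * (A₁ * A₂)) ?_ ?_ ?_ ?_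
      · rw [natDegree_C_mul (hεne _), natDegree_mul hA₁ne hA₂ne, hdeg₁, hdeg₂]
        omega
      · intro x hx
        have heq : (C ((-1 : ℝ) ^ (m₂ + 1)) * (A₁ * A₂)).eval x * A₁.eval x / (x - t)
            = (A₁.eval x) ^ 2 * ((-1 : ℝ) ^ (m₂ + 1) * A₂.eval x) / (x - t) := by
          simp only [eval_mul, eval_C, eval_sub, eval_X]; ring
        have hok : 0 ≤ (A₁.eval x) ^ 2 * ((-1 : ℝ) ^ (m₂ + 1) * A₂.eval x) / (x - t) := by
          refine div_nonneg_aux (sq_nonneg _) ?_ (hxt₁ x hx)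
          obtain ⟨hxa, hxb⟩ := hx
          exact le_of_lt (mul_pos_of_neg_of_neg (sgn2' x hxb) (show x - t < 0 by linarith))
        linarith [heq, hok]
      · intro x hx
        have heq : (C ((-1 : ℝ) ^ (m₂ + 1)) * (A₁ * A₂)).eval x * A₂.eval x / (x - t)
            = (A₂.eval x) ^ 2 * ((-1 : ℝ) ^ (m₂ + 1) * A₁.eval x) / (x - t) := by
          simp only [eval_mul, eval_C, eval_sub, eval_X]; ring
        have hok : 0 ≤ (A₂.eval x) ^ 2 * ((-1 : ℝ) ^ (m₂ + 1) * A₁.eval x) / (x - t) := by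
          refine div_nonneg_aux (sq_nonneg _) ?_ (hxt₂ x hx)
          obtain ⟨hxa, hxb⟩ := hx
          exact le_of_lt (mul_pos (sgn1 x hxa) (show (0:ℝ) < x - t by linarith))
        linarith [heq, hok]
      · intro x hx hx0
        have hd := hxt₁ x hx
        have heq : (C ((-1 : ℝ) ^ (m₂ + 1)) * (A₁ * A₂)).eval x * A₁.eval x / (x - t)
            = (A₁.eval x) ^ 2 * ((-1 : ℝ) ^ (m₂ + 1) * A₂.eval x) / (x - t) := by
          simp only [eval_mul, eval_C, eval_sub, eval_X]; ring
        have h0 : (A₁.eval x) ^ 2 * ((-1 : ℝ) ^ (m₂ + 1) * A₂.eval x) / (x - t) = 0 := by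
          rw [← heq]; exact hx0
        have hnum := (div_eq_zero_iff.mp h0).resolve_right hd
        have hb : ((-1 : ℝ) ^ (m₂ + 1) * A₂.eval x) ≠ 0 := by
          have h2 := sgn2 x hx.2
          refine mul_ne_zero (hεne _) ?_
          intro h0
          rw [h0, mul_zero] at h2
          exact lt_irrefl 0 h2
        exact sq_eq_zero_iff.mp ((mul_eq_zero.mp hnum).resolve_right hb)
    · -- β₂ < t
      refine happly (C ((-1 : ℝ) ^ m₂) * (A₁ * A₂ * (X - C c))) ?_ ?_ ?_ ?_
      · rw [natDegree_C_mul (hεne _), natDegree_mul (mul_ne_zero hA₁ne hA₂ne)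
          (X_sub_C_ne_zero c), natDegree_mul hA₁ne hA₂ne, natDegree_X_sub_C, hdeg₁, hdeg₂]
        omega
      · intro x hx
        have heq : (C ((-1 : ℝ) ^ (m₂)) * (A₁ * A₂ * (X - C c))).eval x * A₁.eval x / (x - t)
            = (A₁.eval x) ^ 2 * ((-1 : ℝ) ^ (m₂) * A₂.eval x * (x - c)) / (x - t) := by
          simp only [eval_mul, eval_C, eval_sub, eval_X]; ring
        have hok : 0 ≤ (A₁.eval x) ^ 2 * ((-1 : ℝ) ^ (m₂) * A₂.eval x * (x - c)) / (x - t) := by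
          refine div_nonneg_aux (sq_nonneg _) ?_ (hxt₁ x hx)
          obtain ⟨hxa, hxb⟩ := hx
          exact le_of_lt (mul_pos_of_neg_of_neg (mul_neg_of_pos_of_neg (sgn2 x hxb)
            (show x - c < 0 by linarith)) (show x - t < 0 by linarith [hab₂]))
        linarith [heq, hok]
      · intro x hx
        have heq : (C ((-1 : ℝ) ^ (m₂)) * (A₁ * A₂ * (X - C c))).eval x * A₂.eval x / (x - t)
            = (A₂.eval x) ^ 2 * ((-1 : ℝ) ^ (m₂) * A₁.eval x * (x - c)) / (x - t) := by
          simp only [eval_mul, eval_C, eval_sub, eval_X]; ring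
        have hok : 0 ≤ (A₂.eval x) ^ 2 * ((-1 : ℝ) ^ (m₂) * A₁.eval x * (x - c)) / (x - t) := by
          refine div_nonneg_aux (sq_nonneg _) ?_ (hxt₂ x hx)
          obtain ⟨hxa, hxb⟩ := hx
          exact le_of_lt (mul_pos_of_neg_of_neg (mul_neg_of_neg_of_pos (sgn1' x hxa)
            (show (0:ℝ) < x - c by linarith)) (show x - t < 0 by linarith))
        linarith [heq, hok]
      · intro x hx hx0
        have hd := hxt₁ x hx
        have heq : (C ((-1 : ℝ) ^ (m₂)) * (A₁ * A₂ * (X - C c))).eval x * A₁.eval x / (x - t)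
            = (A₁.eval x) ^ 2 * ((-1 : ℝ) ^ (m₂) * A₂.eval x * (x - c)) / (x - t) := by
          simp only [eval_mul, eval_C, eval_sub, eval_X]; ring
        have h0 : (A₁.eval x) ^ 2 * ((-1 : ℝ) ^ (m₂) * A₂.eval x * (x - c)) / (x - t) = 0 := by
          rw [← heq]; exact hx0
        have hnum := (div_eq_zero_iff.mp h0).resolve_right hd
        have hcx : x - c ≠ 0 := sub_ne_zero.mpr (ne_of_lt (lt_of_le_of_lt hx.2 hc1))
        have hb : ((-1 : ℝ) ^ (m₂) * A₂.eval x * (x - c)) ≠ 0 := by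
          have h2 := sgn2 x hx.2
          refine mul_ne_zero (mul_ne_zero (hεne _) ?_) hcx
          intro h0
          rw [h0, mul_zero] at h2
          exact lt_irrefl 0 h2
        exact sq_eq_zero_iff.mp ((mul_eq_zero.mp hnum).resolve_right hb)
  · -- complex pole case
    have hLz' := hLz
    simp only [hL] at hLz'
    have hxz : ∀ x : ℝ, (x : ℂ) - z ≠ 0 := by
      intro x h
      apply him
      have h2 := congrArg Complex.im h
      simp only [Complex.sub_im, Complex.ofReal_im, Complex.zero_im, zero_sub,
        neg_eq_zero] at h2
      exact h2
    have hxw : ∀ x : ℝ, (x : ℂ) - (starRingEnd ℂ) z ≠ 0 := by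
      intro x h
      apply him
      have h2 := congrArg Complex.im h
      simp only [Complex.sub_im, Complex.ofReal_im, Complex.conj_im, Complex.zero_im,
        zero_sub, neg_neg] at h2
      exact h2
    have hzw : z - (starRingEnd ℂ) z ≠ 0 := by
      intro h
      apply him
      have h2 := congrArg Complex.im h
      rw [Complex.sub_im, Complex.conj_im, Complex.zero_im] at h2
      linarith
    have hLw : L ((starRingEnd ℂ) z) = 0 := by
      have hconj : L ((starRingEnd ℂ) z) = (starRingEnd ℂ) (L z) := by
        simp only [hL]
        rw [map_add, ← integral_conj, ← integral_conj]
        congr 1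
        · congr 1
          funext x
          rw [map_div₀, map_sub, Complex.conj_ofReal, Complex.conj_ofReal]
        · congr 1
          funext x
          rw [map_div₀, map_sub, Complex.conj_ofReal, Complex.conj_ofReal]
      rw [hconj, hLz, map_zero]
    have hLw' := hLw
    simp only [hL] at hLw'
    have hppos : ∀ x : ℝ, 0 < (x - z.re) ^ 2 + z.im ^ 2 := by
      intro x
      have h2 : 0 < z.im ^ 2 := lt_of_le_of_ne (sq_nonneg z.im) (Ne.symm (pow_ne_zero 2 him))
      nlinarith [sq_nonneg (x - z.re)]
    have hpne : ∀ x : ℝ, (x - z.re) ^ 2 + z.im ^ 2 ≠ 0 := fun x => (hppos x).ne'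
    have hpfac : ∀ x : ℝ, (((x - z.re) ^ 2 + z.im ^ 2 : ℝ) : ℂ)
        = ((x : ℂ) - z) * ((x : ℂ) - (starRingEnd ℂ) z) := by
      intro x
      have h1 : ((x : ℂ) - (starRingEnd ℂ) z) = (starRingEnd ℂ) ((x : ℂ) - z) := by
        rw [map_sub, Complex.conj_ofReal]
      rw [h1, Complex.mul_conj]
      apply Complex.ofReal_inj.mpr
      simp only [Complex.normSq_apply, Complex.sub_re, Complex.sub_im, Complex.ofReal_re,
        Complex.ofReal_im]
      ring
    -- the two vanishing complex sums
    have hediv : ∀ (A : ℝ[X]) (μ : Measure ℝ) (ζ : ℂ),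
        (∫ x, ((A.eval x : ℝ) : ℂ) / ((x : ℂ) - ζ) ∂μ)
          = - ∫ x, ((A.eval x : ℝ) : ℂ) / (ζ - (x : ℂ)) ∂μ := by
      intro A μ ζ
      rw [← integral_neg]
      congr 1
      funext x
      rw [show (x : ℂ) - ζ = -(ζ - (x : ℂ)) by ring, div_neg]
    have hFz : (∫ x, ((A₁.eval x : ℝ) : ℂ) / ((x : ℂ) - z) ∂μ₁)
        + (∫ x, ((A₂.eval x : ℝ) : ℂ) / ((x : ℂ) - z) ∂μ₂) = 0 := by
      rw [hediv A₁ μ₁ z, hediv A₂ μ₂ z, ← neg_add, hLz', neg_zero]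
    have hFw : (∫ x, ((A₁.eval x : ℝ) : ℂ) / ((x : ℂ) - (starRingEnd ℂ) z) ∂μ₁)
        + (∫ x, ((A₂.eval x : ℝ) : ℂ) / ((x : ℂ) - (starRingEnd ℂ) z) ∂μ₂) = 0 := by
      rw [hediv A₁ μ₁ _, hediv A₂ μ₂ _, ← neg_add, hLw', neg_zero]
    -- key orthogonality with the quadratic divided out
    have KEYC : ∀ Q : ℝ[X], Q.natDegree ≤ (m₁ + 1) + (m₂ + 1) →
        (∫ x, Q.eval x * A₁.eval x / ((x - z.re) ^ 2 + z.im ^ 2) ∂μ₁)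
          + (∫ x, Q.eval x * A₂.eval x / ((x - z.re) ^ 2 + z.im ^ 2) ∂μ₂) = 0 := by
      intro Q hQ
      set P : ℝ[X] := X ^ 2 + (C (-(2 * z.re)) * X + C (z.re ^ 2 + z.im ^ 2)) with hPdef
      have hPm : P.Monic := monic_X_pow_add (lt_of_le_of_lt degree_linear_le (by norm_num))
      have hPdeg : P.natDegree = 2 := by
        apply natDegree_eq_of_degree_eq_some
        rw [hPdef, degree_add_eq_left_of_degree_lt, degree_X_pow]
        rw [degree_X_pow]
        exact lt_of_le_of_lt degree_linear_le (by norm_num)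
      have hPeval : ∀ x : ℝ, P.eval x = (x - z.re) ^ 2 + z.im ^ 2 := by
        intro x
        rw [hPdef]
        simp only [eval_add, eval_mul, eval_pow, eval_X, eval_C]
        ring
      set q : ℝ[X] := Q /ₘ P with hqdef
      set r : ℝ[X] := Q %ₘ P with hrdef
      have hqd : q.natDegree + 2 ≤ (m₁ + 1) + (m₂ + 1) := by
        have hq1 : q.natDegree = Q.natDegree - 2 := by
          rw [hqdef, natDegree_divByMonic Q hPm, hPdeg]
        omega
      have hrd : r.natDegree < 2 := by
        by_cases hr0 : r = 0
        · rw [hr0]; simp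
        · rw [natDegree_lt_iff_degree_lt hr0,
            show ((2 : ℕ) : WithBot ℕ) = degree P from by
              rw [degree_eq_natDegree hPm.ne_zero, hPdeg]]
          exact degree_modByMonic_lt Q hPm
      have hrev : ∀ x : ℝ, r.eval x = r.coeff 0 + r.coeff 1 * x := by
        intro x
        rw [eval_eq_sum_range' hrd]
        simp [Finset.sum_range_succ]
      have hQx : ∀ x : ℝ, Q.eval x = r.eval x + P.eval x * q.eval x := by
        intro x
        conv_lhs => rw [← modByMonic_add_div Q P]
        rw [eval_add, eval_mul, ← hqdef, ← hrdef]
      have hcontp : Continuous fun x : ℝ => r.eval x * A₁.eval x / ((x - z.re) ^ 2 + z.im ^ 2) :=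
        Continuous.div (by fun_prop) (by fun_prop) hpne
      have step : ∀ (A : ℝ[X]) (μ : Measure ℝ) (a b : ℝ), IsFiniteMeasure μ →
          μ (Set.Icc a b)ᶜ = 0 →
          ∫ x, Q.eval x * A.eval x / ((x - z.re) ^ 2 + z.im ^ 2) ∂μ
            = (∫ x, q.eval x * A.eval x ∂μ)
              + ∫ x, r.eval x * A.eval x / ((x - z.re) ^ 2 + z.im ^ 2) ∂μ := by
        intro A μ a b hfin hμ
        haveI := hfin
        have hint1 : Integrable (fun x => q.eval x * A.eval x) μ :=
          integrable_aux hμ (Continuous.aestronglyMeasurable (by fun_prop))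
            (Continuous.continuousOn (by fun_prop))
        have hcont2 : Continuous fun x : ℝ => r.eval x * A.eval x / ((x - z.re) ^ 2 + z.im ^ 2) :=
          Continuous.div (by fun_prop) (by fun_prop) hpne
        have hint2 : Integrable (fun x => r.eval x * A.eval x / ((x - z.re) ^ 2 + z.im ^ 2)) μ :=
          integrable_aux hμ hcont2.aestronglyMeasurable hcont2.continuousOn
        have e2 : ∫ x, Q.eval x * A.eval x / ((x - z.re) ^ 2 + z.im ^ 2) ∂μ
            = ∫ x, (q.eval x * A.eval x
                + r.eval x * A.eval x / ((x - z.re) ^ 2 + z.im ^ 2)) ∂μ := by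
          apply integral_congr_ae
          filter_upwards with x
          have h0 := hpne x
          rw [hQx x, hPeval x]
          field_simp
          ring
        rw [e2, integral_add hint1 hint2]
      rw [step A₁ μ₁ α₁ β₁ inferInstance hsupp1, step A₂ μ₂ α₂ β₂ inferInstance hsupp2]
      have horth2 := ORTH q hqd
      -- the remainder integrals vanish
      set aa : ℂ := ((r.coeff 0 : ℝ) + (r.coeff 1 : ℝ) * z) / (z - (starRingEnd ℂ) z) with haa
      set bb : ℂ := ((r.coeff 0 : ℝ) + (r.coeff 1 : ℝ) * (starRingEnd ℂ) z)
          / ((starRingEnd ℂ) z - z) with hbb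
      have hpt : ∀ (A : ℝ[X]) (x : ℝ),
          ((r.eval x * A.eval x / ((x - z.re) ^ 2 + z.im ^ 2) : ℝ) : ℂ)
            = aa * (((A.eval x : ℝ) : ℂ) / ((x : ℂ) - z))
              + bb * (((A.eval x : ℝ) : ℂ) / ((x : ℂ) - (starRingEnd ℂ) z)) := by
        intro A x
        rw [Complex.ofReal_div, Complex.ofReal_mul, hpfac x, hrev x, Complex.ofReal_add,
          Complex.ofReal_mul, haa, hbb]
        have h1 := hxz x
        have h2 := hxw x
        have h3 : (starRingEnd ℂ) z - z ≠ 0 := fun hc => hzw (by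
          have : z - (starRingEnd ℂ) z = -((starRingEnd ℂ) z - z) := by ring
          rw [this, hc, neg_zero])
        field_simp [h1, h2, hzw, h3]
        ring
      have hcplx : ∀ (A : ℝ[X]) (μ : Measure ℝ) (a b : ℝ), IsFiniteMeasure μ →
          μ (Set.Icc a b)ᶜ = 0 →
          ((∫ x, r.eval x * A.eval x / ((x - z.re) ^ 2 + z.im ^ 2) ∂μ : ℝ) : ℂ)
            = aa * (∫ x, ((A.eval x : ℝ) : ℂ) / ((x : ℂ) - z) ∂μ)
              + bb * (∫ x, ((A.eval x : ℝ) : ℂ) / ((x : ℂ) - (starRingEnd ℂ) z) ∂μ) := by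
        intro A μ a b hfin hμ
        haveI := hfin
        have hc1 : Continuous fun x : ℝ => ((A.eval x : ℝ) : ℂ) / ((x : ℂ) - z) :=
          Continuous.div (by fun_prop) (by fun_prop) hxz
        have hc2 : Continuous fun x : ℝ => ((A.eval x : ℝ) : ℂ) / ((x : ℂ) - (starRingEnd ℂ) z) :=
          Continuous.div (by fun_prop) (by fun_prop) hxw
        have hi1 : Integrable (fun x : ℝ => ((A.eval x : ℝ) : ℂ) / ((x : ℂ) - z)) μ :=
          integrable_aux hμ hc1.aestronglyMeasurable hc1.continuousOn
        have hi2 : Integrable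
            (fun x : ℝ => ((A.eval x : ℝ) : ℂ) / ((x : ℂ) - (starRingEnd ℂ) z)) μ :=
          integrable_aux hμ hc2.aestronglyMeasurable hc2.continuousOn
        calc ((∫ x, r.eval x * A.eval x / ((x - z.re) ^ 2 + z.im ^ 2) ∂μ : ℝ) : ℂ)
            = ∫ x, ((r.eval x * A.eval x / ((x - z.re) ^ 2 + z.im ^ 2) : ℝ) : ℂ) ∂μ :=
              integral_ofReal.symm
          _ = ∫ x, (aa * (((A.eval x : ℝ) : ℂ) / ((x : ℂ) - z))
                + bb * (((A.eval x : ℝ) : ℂ) / ((x : ℂ) - (starRingEnd ℂ) z))) ∂μ :=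
              integral_congr_ae (Filter.Eventually.of_forall fun x => hpt A x)
          _ = aa * (∫ x, ((A.eval x : ℝ) : ℂ) / ((x : ℂ) - z) ∂μ)
                + bb * (∫ x, ((A.eval x : ℝ) : ℂ) / ((x : ℂ) - (starRingEnd ℂ) z) ∂μ) := by
              rw [integral_add (hi1.const_mul aa) (hi2.const_mul bb), integral_const_mul,
                integral_const_mul]
      have hrp : (∫ x, r.eval x * A₁.eval x / ((x - z.re) ^ 2 + z.im ^ 2) ∂μ₁)
          + (∫ x, r.eval x * A₂.eval x / ((x - z.re) ^ 2 + z.im ^ 2) ∂μ₂) = 0 := by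
        have h0 : (((∫ x, r.eval x * A₁.eval x / ((x - z.re) ^ 2 + z.im ^ 2) ∂μ₁)
            + (∫ x, r.eval x * A₂.eval x / ((x - z.re) ^ 2 + z.im ^ 2) ∂μ₂) : ℝ) : ℂ) = 0 := by
          rw [Complex.ofReal_add, hcplx A₁ μ₁ α₁ β₁ inferInstance hsupp1,
            hcplx A₂ μ₂ α₂ β₂ inferInstance hsupp2]
          linear_combination aa * hFz + bb * hFw
        exact_mod_cast h0
      linarith [horth2, hrp]
    -- apply the machine
    have happlyC : ∀ Q : ℝ[X], Q.natDegree ≤ (m₁ + 1) + (m₂ + 1) →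
        (∀ x ∈ Set.Icc α₁ β₁, 0 ≤ Q.eval x * A₁.eval x / ((x - z.re) ^ 2 + z.im ^ 2)) →
        (∀ x ∈ Set.Icc α₂ β₂, 0 ≤ Q.eval x * A₂.eval x / ((x - z.re) ^ 2 + z.im ^ 2)) →
        (∀ x ∈ Set.Icc α₁ β₁, Q.eval x * A₁.eval x / ((x - z.re) ^ 2 + z.im ^ 2) = 0 →
          A₁.eval x = 0) → False := by
      intro Q hQd hp1 hp2 hz1
      have hcont1 : Continuous fun x : ℝ => Q.eval x * A₁.eval x / ((x - z.re) ^ 2 + z.im ^ 2) :=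
        Continuous.div (by fun_prop) (by fun_prop) hpne
      have hcont2 : Continuous fun x : ℝ => Q.eval x * A₂.eval x / ((x - z.re) ^ 2 + z.im ^ 2) :=
        Continuous.div (by fun_prop) (by fun_prop) hpne
      exact hfinal _ _ (integrable_aux hsupp1 hcont1.aestronglyMeasurable hcont1.continuousOn)
        (integrable_aux hsupp2 hcont2.aestronglyMeasurable hcont2.continuousOn)
        (KEYC Q hQd) hp1 hp2 hz1
    have hεne : ∀ k : ℕ, ((-1 : ℝ) ^ k) ≠ 0 := fun k => pow_ne_zero k (by norm_num)
    have sgn1' : ∀ x : ℝ, α₂ ≤ x → (-1 : ℝ) ^ m₂ * A₁.eval x < 0 := by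
      intro x hx
      have h := sgn1 x hx
      have he : (-1 : ℝ) ^ (m₂ + 1) * A₁.eval x = -((-1 : ℝ) ^ m₂ * A₁.eval x) := by ring
      linarith [he, h]
    have sgn2' : ∀ x : ℝ, x ≤ β₁ → (-1 : ℝ) ^ (m₂ + 1) * A₂.eval x < 0 := by
      intro x hx
      have h := sgn2 x hx
      have he : (-1 : ℝ) ^ (m₂ + 1) * A₂.eval x = -((-1 : ℝ) ^ m₂ * A₂.eval x) := by ring
      linarith [he, h]
    refine happlyC (C ((-1 : ℝ) ^ (m₂ + 1)) * (A₁ * A₂ * (X - C c))) ?_ ?_ ?_ ?_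
    · rw [natDegree_C_mul (hεne _), natDegree_mul (mul_ne_zero hA₁ne hA₂ne)
        (X_sub_C_ne_zero c), natDegree_mul hA₁ne hA₂ne, natDegree_X_sub_C, hdeg₁, hdeg₂]
      omega
    · intro x hx
      have heq : (C ((-1 : ℝ) ^ (m₂ + 1)) * (A₁ * A₂ * (X - C c))).eval x * A₁.eval x
            / ((x - z.re) ^ 2 + z.im ^ 2)
          = (A₁.eval x) ^ 2 * ((-1 : ℝ) ^ (m₂ + 1) * A₂.eval x * (x - c))
            / ((x - z.re) ^ 2 + z.im ^ 2) := by
        simp only [eval_mul, eval_C, eval_sub, eval_X]; ring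
      have hok : 0 ≤ (A₁.eval x) ^ 2 * ((-1 : ℝ) ^ (m₂ + 1) * A₂.eval x * (x - c))
          / ((x - z.re) ^ 2 + z.im ^ 2) := by
        refine div_nonneg_aux (sq_nonneg _) ?_ (hpne x)
        obtain ⟨hxa, hxb⟩ := hx
        exact le_of_lt (mul_pos (mul_pos_of_neg_of_neg (sgn2' x hxb)
          (show x - c < 0 by linarith)) (hppos x))
      linarith [heq, hok]
    · intro x hx
      have heq : (C ((-1 : ℝ) ^ (m₂ + 1)) * (A₁ * A₂ * (X - C c))).eval x * A₂.eval x
            / ((x - z.re) ^ 2 + z.im ^ 2)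
          = (A₂.eval x) ^ 2 * ((-1 : ℝ) ^ (m₂ + 1) * A₁.eval x * (x - c))
            / ((x - z.re) ^ 2 + z.im ^ 2) := by
        simp only [eval_mul, eval_C, eval_sub, eval_X]; ring
      have hok : 0 ≤ (A₂.eval x) ^ 2 * ((-1 : ℝ) ^ (m₂ + 1) * A₁.eval x * (x - c))
          / ((x - z.re) ^ 2 + z.im ^ 2) := by
        refine div_nonneg_aux (sq_nonneg _) ?_ (hpne x)
        obtain ⟨hxa, hxb⟩ := hx
        exact le_of_lt (mul_pos (mul_pos (sgn1 x hxa)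
          (show (0:ℝ) < x - c by linarith)) (hppos x))
      linarith [heq, hok]
    · intro x hx hx0
      have hd := hpne x
      have heq : (C ((-1 : ℝ) ^ (m₂ + 1)) * (A₁ * A₂ * (X - C c))).eval x * A₁.eval x
            / ((x - z.re) ^ 2 + z.im ^ 2)
          = (A₁.eval x) ^ 2 * ((-1 : ℝ) ^ (m₂ + 1) * A₂.eval x * (x - c))
            / ((x - z.re) ^ 2 + z.im ^ 2) := by
        simp only [eval_mul, eval_C, eval_sub, eval_X]; ring
      have h0 : (A₁.eval x) ^ 2 * ((-1 : ℝ) ^ (m₂ + 1) * A₂.eval x * (x - c))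
          / ((x - z.re) ^ 2 + z.im ^ 2) = 0 := by
        rw [← heq]; exact hx0
      have hnum := (div_eq_zero_iff.mp h0).resolve_right hd
      have hcx : x - c ≠ 0 := sub_ne_zero.mpr (ne_of_lt (lt_of_le_of_lt hx.2 hc1))
      have hb : (-1 : ℝ) ^ (m₂ + 1) * A₂.eval x * (x - c) ≠ 0 := by
        have h2 := sgn2 x hx.2
        refine mul_ne_zero (mul_ne_zero (hεne _) ?_) hcx
        intro h0'
        rw [h0', mul_zero] at h2
        exact lt_irrefl 0 h2
      exact sq_eq_zero_iff.mp ((mul_eq_zero.mp hnum).resolve_right hb)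
end

section
/- Let (μ₁, μ₂) be an Angelesco system with Δ₁ < Δ₂, let ϰ = (ϰ₁, ϰ₂) ∈ ℝ² satisfy ϰ₁ + ϰ₂ = 1, and define L(z) = (ϰ₁/μ₁(ℝ)) μ̂₁(z) + (ϰ₂/μ₂(ℝ)) μ̂₂(z), where μ̂ᵢ(z) = ∫ dμᵢ(x)/(z − x) is the Markov function of μᵢ. Then the set E_ϰ = { E ∈ ℝ ∖ (Δ₁ ∪ Δ₂) : L(E) = 0 } contains at most one point; E_ϰ is empty when ϰ = (1,0) or ϰ = (0,1); and every E ∈ E_ϰ is a simple zero of L, i.e., L′(E) ≠ 0. -/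
open MeasureTheory

namespace Stmt7Aux

open Filter Set Metric

lemma inv_anti_neg {a b : ℝ} (hb : b < 0) (hab : a ≤ b) : b⁻¹ ≤ a⁻¹ := by
  have ha : a < 0 := lt_of_le_of_lt hab hb
  have h1 : (-a)⁻¹ ≤ (-b)⁻¹ := inv_anti₀ (by linarith : (0:ℝ) < -b) (by linarith)
  rw [inv_neg, inv_neg] at h1
  linarith

lemma inv_lt_inv_neg {a b : ℝ} (hb : b < 0) (hab : a < b) : b⁻¹ < a⁻¹ := by
  have ha : a < 0 := lt_trans hab hb
  have h1 : (-a)⁻¹ < (-b)⁻¹ := inv_strictAnti₀ (by linarith : (0:ℝ) < -b) (by linarith)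
  rw [inv_neg, inv_neg] at h1
  linarith

lemma ae_Icc {μ : Measure ℝ} {α β : ℝ} (hsupp : μ (Set.Icc α β)ᶜ = 0) :
    ∀ᵐ x ∂μ, x ∈ Set.Icc α β := by
  rw [MeasureTheory.ae_iff, ← Set.compl_def]
  exact hsupp

lemma integrable_pair {μ : Measure ℝ} [IsFiniteMeasure μ] {E : ℝ} (d : ℝ) (hd : 0 < d)
    (h : ∀ᵐ x ∂μ, d ≤ |E - x|) :
    Integrable (fun x => (E - x)⁻¹) μ ∧ Integrable (fun x => ((E - x) ^ 2)⁻¹) μ := by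
  have hm1 : AEStronglyMeasurable (fun x : ℝ => (E - x)⁻¹) μ :=
    ((measurable_const.sub measurable_id).inv).aestronglyMeasurable
  have hm2 : AEStronglyMeasurable (fun x : ℝ => ((E - x) ^ 2)⁻¹) μ :=
    (((measurable_const.sub measurable_id).pow_const 2).inv).aestronglyMeasurable
  constructor
  · refine ⟨hm1, HasFiniteIntegral.of_bounded (C := d⁻¹) ?_⟩
    filter_upwards [h] with x hx
    rw [Real.norm_eq_abs, abs_inv]
    exact inv_anti₀ hd hx
  · refine ⟨hm2, HasFiniteIntegral.of_bounded (C := (d ^ 2)⁻¹) ?_⟩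
    filter_upwards [h] with x hx
    rw [Real.norm_eq_abs, abs_inv, abs_pow]
    exact inv_anti₀ (pow_pos hd 2) (pow_le_pow_left₀ hd.le hx 2)

lemma integrable_off {μ : Measure ℝ} [IsFiniteMeasure μ] {α β E : ℝ}
    (hsupp : μ (Set.Icc α β)ᶜ = 0) (hE : E < α ∨ β < E) :
    Integrable (fun x => (E - x)⁻¹) μ ∧ Integrable (fun x => ((E - x) ^ 2)⁻¹) μ := by
  rcases hE with h | h
  · apply integrable_pair (α - E) (by linarith)
    filter_upwards [ae_Icc hsupp] with x hx
    rw [abs_sub_comm, abs_of_nonneg (by linarith [hx.1] : (0:ℝ) ≤ x - E)]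
    linarith [hx.1]
  · apply integrable_pair (E - β) (by linarith)
    filter_upwards [ae_Icc hsupp] with x hx
    rw [abs_of_nonneg (by linarith [hx.2] : (0:ℝ) ≤ E - x)]
    linarith [hx.2]

lemma markov_facts {μ : Measure ℝ} [IsFiniteMeasure μ] {α β E : ℝ}
    (hsupp : μ (Set.Icc α β)ᶜ = 0) (hαβ : α ≤ β) (hE : E < α ∨ β < E) :
    (μ Set.univ).toReal * (E - α)⁻¹ ≤ ∫ x, (E - x)⁻¹ ∂μ ∧
    (∫ x, (E - x)⁻¹ ∂μ) ≤ (μ Set.univ).toReal * (E - β)⁻¹ ∧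
    HasDerivAt (fun z => ∫ x, (z - x)⁻¹ ∂μ) (-∫ x, ((E - x) ^ 2)⁻¹ ∂μ) E := by
  obtain ⟨hi1, hi2⟩ := integrable_off hsupp hE
  have hpt : ∀ᵐ x ∂μ, (E - α)⁻¹ ≤ (E - x)⁻¹ ∧ (E - x)⁻¹ ≤ (E - β)⁻¹ := by
    filter_upwards [ae_Icc hsupp] with x hx
    obtain ⟨hx1, hx2⟩ := hx
    rcases hE with h | h
    · constructor
      · exact inv_anti_neg (by linarith) (by linarith)
      · exact inv_anti_neg (by linarith) (by linarith)
    · constructor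
      · exact inv_anti₀ (by linarith) (by linarith)
      · exact inv_anti₀ (by linarith) (by linarith)
  refine ⟨?_, ?_, ?_⟩
  · have h1 := integral_mono_ae (integrable_const ((E - α)⁻¹)) hi1
      (by filter_upwards [hpt] with x hx using hx.1)
    rwa [integral_const, smul_eq_mul] at h1
  · have h1 := integral_mono_ae hi1 (integrable_const ((E - β)⁻¹))
      (by filter_upwards [hpt] with x hx using hx.2)
    rwa [integral_const, smul_eq_mul] at h1
  · -- derivative
    obtain ⟨ε, hε, hsep⟩ : ∃ ε > 0, ∀ x ∈ Set.Icc α β, ∀ z ∈ Metric.ball E ε, ε ≤ |z - x| := by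
      rcases hE with h | h
      · refine ⟨(α - E) / 2, by linarith, fun x hx z hz => ?_⟩
        rw [Metric.mem_ball, Real.dist_eq] at hz
        have h1 := abs_lt.mp hz
        have h2 : (α - E) / 2 ≤ x - z := by linarith [hx.1]
        calc (α - E) / 2 ≤ x - z := h2
          _ ≤ |x - z| := le_abs_self _
          _ = |z - x| := abs_sub_comm _ _
      · refine ⟨(E - β) / 2, by linarith, fun x hx z hz => ?_⟩
        rw [Metric.mem_ball, Real.dist_eq] at hz
        have h1 := abs_lt.mp hz
        have h2 : (E - β) / 2 ≤ z - x := by linarith [hx.2]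
        calc (E - β) / 2 ≤ z - x := h2
          _ ≤ |z - x| := le_abs_self _
    have key := hasDerivAt_integral_of_dominated_loc_of_deriv_le (μ := μ) (x₀ := E)
        (F := fun z x => (z - x)⁻¹) (F' := fun z x => -((z - x) ^ 2)⁻¹)
        (bound := fun _ => (ε ^ 2)⁻¹) (Metric.ball_mem_nhds E hε)
        (Filter.Eventually.of_forall fun z =>
          ((measurable_const.sub measurable_id).inv).aestronglyMeasurable)
        hi1
        hi2.neg.aestronglyMeasurable
        ?_ (integrable_const _) ?_
    · have h2 := key.2
      rwa [integral_neg] at h2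
    · filter_upwards [ae_Icc hsupp] with x hx z hz
      have h1 := hsep x hx z hz
      rw [norm_neg, Real.norm_eq_abs, abs_inv, abs_pow]
      exact inv_anti₀ (pow_pos hε 2) (pow_le_pow_left₀ hε.le h1 2)
    · filter_upwards [ae_Icc hsupp] with x hx z hz
      have h1 := hsep x hx z hz
      have hne : z - x ≠ 0 := by
        intro hc
        rw [hc, abs_zero] at h1
        linarith
      have h2 := ((hasDerivAt_id z).sub_const x).inv hne
      exact (by simpa [neg_div, one_div] using h2 : HasDerivAt (fun y => y - x)⁻¹ (-((z - x) ^ 2)⁻¹) z)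

lemma sq_bounds_right {μ : Measure ℝ} [IsFiniteMeasure μ] {α β E : ℝ}
    (hsupp : μ (Set.Icc α β)ᶜ = 0) (hE : β < E) :
    (E - α)⁻¹ * ∫ x, (E - x)⁻¹ ∂μ ≤ ∫ x, ((E - x) ^ 2)⁻¹ ∂μ ∧
    (∫ x, ((E - x) ^ 2)⁻¹ ∂μ) ≤ (E - β)⁻¹ * ∫ x, (E - x)⁻¹ ∂μ := by
  obtain ⟨hi1, hi2⟩ := integrable_off hsupp (Or.inr hE)
  constructor
  · have h1 := integral_mono_ae (hi1.const_mul ((E - α)⁻¹)) hi2 ?_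
    · rwa [integral_const_mul] at h1
    · filter_upwards [ae_Icc hsupp] with x hx
      have h1 : 0 < E - x := by linarith [hx.2]
      have h3 : (E - α)⁻¹ ≤ (E - x)⁻¹ := inv_anti₀ h1 (by linarith [hx.1])
      have h4 : 0 < (E - x)⁻¹ := inv_pos.2 h1
      have h5 : ((E - x) ^ 2)⁻¹ = (E - x)⁻¹ * (E - x)⁻¹ := by rw [sq, mul_inv]
      rw [h5]
      nlinarith
  · have h1 := integral_mono_ae hi2 (hi1.const_mul ((E - β)⁻¹)) ?_
    · rwa [integral_const_mul] at h1
    · filter_upwards [ae_Icc hsupp] with x hx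
      have h1 : 0 < E - x := by linarith [hx.2]
      have h3 : (E - x)⁻¹ ≤ (E - β)⁻¹ := inv_anti₀ (by linarith) (by linarith [hx.2])
      have h4 : 0 < (E - x)⁻¹ := inv_pos.2 h1
      have h5 : ((E - x) ^ 2)⁻¹ = (E - x)⁻¹ * (E - x)⁻¹ := by rw [sq, mul_inv]
      rw [h5]
      nlinarith

lemma sq_bounds_left {μ : Measure ℝ} [IsFiniteMeasure μ] {α β E : ℝ}
    (hsupp : μ (Set.Icc α β)ᶜ = 0) (hE : E < α) :
    (E - β)⁻¹ * ∫ x, (E - x)⁻¹ ∂μ ≤ ∫ x, ((E - x) ^ 2)⁻¹ ∂μ ∧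
    (∫ x, ((E - x) ^ 2)⁻¹ ∂μ) ≤ (E - α)⁻¹ * ∫ x, (E - x)⁻¹ ∂μ := by
  obtain ⟨hi1, hi2⟩ := integrable_off hsupp (Or.inl hE)
  constructor
  · have h1 := integral_mono_ae (hi1.const_mul ((E - β)⁻¹)) hi2 ?_
    · rwa [integral_const_mul] at h1
    · filter_upwards [ae_Icc hsupp] with x hx
      have h1 : E - x < 0 := by linarith [hx.1]
      have h3 : (E - x)⁻¹ ≤ (E - β)⁻¹ := inv_anti_neg h1 (by linarith [hx.2])
      have h4 : (E - x)⁻¹ < 0 := inv_lt_zero.2 h1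
      have h5 : ((E - x) ^ 2)⁻¹ = (E - x)⁻¹ * (E - x)⁻¹ := by rw [sq, mul_inv]
      rw [h5]
      nlinarith
  · have h1 := integral_mono_ae hi2 (hi1.const_mul ((E - α)⁻¹)) ?_
    · rwa [integral_const_mul] at h1
    · filter_upwards [ae_Icc hsupp] with x hx
      have h1 : E - x < 0 := by linarith [hx.1]
      have h3 : (E - α)⁻¹ ≤ (E - x)⁻¹ := inv_anti_neg (by linarith) (by linarith [hx.1])
      have h4 : (E - x)⁻¹ < 0 := inv_lt_zero.2 h1
      have h5 : ((E - x) ^ 2)⁻¹ = (E - x)⁻¹ * (E - x)⁻¹ := by rw [sq, mul_inv]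
      rw [h5]
      nlinarith

/-! ### Pure algebra of zeros -/

lemma algebra_R {ϰ₁ ϰ₂ m₁ m₂ I₁ I₂ J₁ J₂ a b : ℝ}
    (hm₁ : 0 < m₁) (hm₂ : 0 < m₂) (hϰ : ϰ₁ + ϰ₂ = 1)
    (hzero : ϰ₁ / m₁ * I₁ + ϰ₂ / m₂ * I₂ = 0)
    (hI₁pos : 0 < I₁) (hI₁le : I₁ ≤ m₁ * b)
    (hI₂ge : m₂ * a ≤ I₂)
    (hJ₁le : J₁ ≤ b * I₁) (hJ₂ge : a * I₂ ≤ J₂)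
    (hab : b < a) (hbpos : 0 < b) :
    0 < ϰ₁ ∧ ϰ₂ < 0 ∧ ϰ₁ / m₁ * J₁ + ϰ₂ / m₂ * J₂ < 0 := by
  set f := I₁ / m₁ with hf
  set g := I₂ / m₂ with hg
  set F := J₁ / m₁ with hF
  set G := J₂ / m₂ with hG
  have hfpos : 0 < f := div_pos hI₁pos hm₁
  have hfb : f ≤ b := (div_le_iff₀ hm₁).2 (by linarith)
  have hag : a ≤ g := (le_div_iff₀ hm₂).2 (by linarith)
  have hgpos : 0 < g := by linarith
  have hfg : f < g := by linarith
  have h0 : ϰ₁ * f + ϰ₂ * g = 0 := by rw [hf, hg]; linear_combination hzero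
  have hϰ₂neg : ϰ₂ < 0 := by
    by_contra hcon
    push_neg at hcon
    have key : f = -(ϰ₂ * (g - f)) := by linear_combination h0 - f * hϰ
    have h2 : 0 ≤ ϰ₂ * (g - f) := mul_nonneg hcon (by linarith)
    linarith
  have hϰ₁pos : 0 < ϰ₁ := by linarith
  refine ⟨hϰ₁pos, hϰ₂neg, ?_⟩
  have hFle : F ≤ b * f := by
    rw [hF, hf, ← mul_div_assoc]
    exact (div_le_div_iff_of_pos_right hm₁).2 hJ₁le
  have hGge : a * g ≤ G := by
    rw [hG, hg, ← mul_div_assoc]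
    exact (div_le_div_iff_of_pos_right hm₂).2 hJ₂ge
  have h1 : ϰ₁ * F ≤ ϰ₁ * (b * f) := mul_le_mul_of_nonneg_left hFle hϰ₁pos.le
  have h2 : ϰ₂ * G ≤ ϰ₂ * (a * g) := mul_le_mul_of_nonpos_left hGge hϰ₂neg.le
  have h3 : ϰ₁ * (b * f) = -(ϰ₂ * (b * g)) := by linear_combination b * h0
  have h4 : ϰ₂ * g * (a - b) < 0 :=
    mul_neg_of_neg_of_pos (mul_neg_of_neg_of_pos hϰ₂neg hgpos) (by linarith)
  have hgoal : ϰ₁ / m₁ * J₁ + ϰ₂ / m₂ * J₂ = ϰ₁ * F + ϰ₂ * G := by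
    rw [hF, hG]; ring
  rw [hgoal]
  nlinarith

lemma algebra_L {ϰ₁ ϰ₂ m₁ m₂ I₁ I₂ J₁ J₂ a b c : ℝ}
    (hm₁ : 0 < m₁) (hm₂ : 0 < m₂) (hϰ : ϰ₁ + ϰ₂ = 1)
    (hzero : ϰ₁ / m₁ * I₁ + ϰ₂ / m₂ * I₂ = 0)
    (hI₁le : I₁ ≤ m₁ * b) (hI₂ge : m₂ * a ≤ I₂) (hI₂le : I₂ ≤ m₂ * c)
    (hJ₁ge : b * I₁ ≤ J₁) (hJ₂le : J₂ ≤ a * I₂)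
    (hab : b < a) (hc : c < 0) (ha : a < 0) :
    ϰ₁ < 0 ∧ 0 < ϰ₂ ∧ ϰ₁ / m₁ * J₁ + ϰ₂ / m₂ * J₂ < 0 := by
  set f := I₁ / m₁ with hf
  set g := I₂ / m₂ with hg
  set F := J₁ / m₁ with hF
  set G := J₂ / m₂ with hG
  have hfb : f ≤ b := (div_le_iff₀ hm₁).2 (by linarith)
  have hag : a ≤ g := (le_div_iff₀ hm₂).2 (by linarith)
  have hgc : g ≤ c := (div_le_iff₀ hm₂).2 (by linarith)
  have hgneg : g < 0 := by linarith
  have hfneg : f < 0 := by linarith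
  have hfg : f < g := by linarith
  have h0 : ϰ₁ * f + ϰ₂ * g = 0 := by rw [hf, hg]; linear_combination hzero
  have hϰ₁neg : ϰ₁ < 0 := by
    by_contra hcon
    push_neg at hcon
    have key : g = -(ϰ₁ * (f - g)) := by linear_combination h0 - g * hϰ
    have h2 : 0 ≤ ϰ₁ * (g - f) := mul_nonneg hcon (by linarith)
    linarith
  have hϰ₂pos : 0 < ϰ₂ := by linarith
  refine ⟨hϰ₁neg, hϰ₂pos, ?_⟩
  have hFge : b * f ≤ F := by
    rw [hF, hf, ← mul_div_assoc]
    exact (div_le_div_iff_of_pos_right hm₁).2 hJ₁ge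
  have hGle : G ≤ a * g := by
    rw [hG, hg, ← mul_div_assoc]
    exact (div_le_div_iff_of_pos_right hm₂).2 hJ₂le
  have h1 : ϰ₁ * F ≤ ϰ₁ * (b * f) := mul_le_mul_of_nonpos_left hFge hϰ₁neg.le
  have h2 : ϰ₂ * G ≤ ϰ₂ * (a * g) := mul_le_mul_of_nonneg_left hGle hϰ₂pos.le
  have h3 : ϰ₁ * (b * f) = -(ϰ₂ * (b * g)) := by linear_combination b * h0
  have h4 : ϰ₂ * g * (a - b) < 0 :=
    mul_neg_of_neg_of_pos (mul_neg_of_pos_of_neg hϰ₂pos hgneg) (by linarith)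
  have hgoal : ϰ₁ / m₁ * J₁ + ϰ₂ / m₂ * J₂ = ϰ₁ * F + ϰ₂ * G := by
    rw [hF, hG]; ring
  rw [hgoal]
  nlinarith

lemma algebra_M {ϰ₁ ϰ₂ m₁ m₂ I₁ I₂ J₁ J₂ : ℝ}
    (hm₁ : 0 < m₁) (hm₂ : 0 < m₂) (hϰ : ϰ₁ + ϰ₂ = 1)
    (hzero : ϰ₁ / m₁ * I₁ + ϰ₂ / m₂ * I₂ = 0)
    (hI₁pos : 0 < I₁) (hI₂neg : I₂ < 0)
    (hJ₁pos : 0 < J₁) (hJ₂pos : 0 < J₂) :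
    0 < ϰ₁ ∧ 0 < ϰ₂ ∧ 0 < ϰ₁ / m₁ * J₁ + ϰ₂ / m₂ * J₂ := by
  set f := I₁ / m₁ with hf
  set g := I₂ / m₂ with hg
  have hfpos : 0 < f := div_pos hI₁pos hm₁
  have hgneg : g < 0 := div_neg_of_neg_of_pos hI₂neg hm₂
  have h0 : ϰ₁ * f + ϰ₂ * g = 0 := by rw [hf, hg]; linear_combination hzero
  have hϰ₁pos : 0 < ϰ₁ := by
    by_contra hcon
    push_neg at hcon
    have hint1 : 0 ≤ -ϰ₁ * f := mul_nonneg (by linarith) hfpos.le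
    have hint2 : 0 ≤ (ϰ₂ - 1) * (-g) := mul_nonneg (by linarith) (by linarith)
    nlinarith
  have hϰ₂pos : 0 < ϰ₂ := by
    by_contra hcon
    push_neg at hcon
    have hint1 : 0 ≤ (-ϰ₂) * (-g) := mul_nonneg (by linarith) (by linarith)
    have hint2 : 0 ≤ (ϰ₁ - 1) * f := mul_nonneg (by linarith) hfpos.le
    nlinarith
  exact ⟨hϰ₁pos, hϰ₂pos,
    add_pos (mul_pos (div_pos hϰ₁pos hm₁) hJ₁pos) (mul_pos (div_pos hϰ₂pos hm₂) hJ₂pos)⟩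

/-! ### Two zeros with positive derivative at each zero is impossible -/

lemma eventually_pos_right {L : ℝ → ℝ} {c d : ℝ} (h : HasDerivAt L d c) (hd : 0 < d)
    (h0 : L c = 0) : ∀ᶠ x in nhdsWithin c (Set.Ioi c), 0 < L x := by
  have hs : Filter.Tendsto (slope L c) (nhdsWithin c {c}ᶜ) (nhds d) :=
    hasDerivAt_iff_tendsto_slope.mp h
  have hev : ∀ᶠ x in nhdsWithin c {c}ᶜ, 0 < slope L c x :=
    hs.eventually (eventually_gt_nhds hd)
  have hmono : nhdsWithin c (Set.Ioi c) ≤ nhdsWithin c {c}ᶜ :=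
    nhdsWithin_mono c fun x hx => ne_of_gt hx
  filter_upwards [hmono hev, self_mem_nhdsWithin] with x hx hxc
  rw [slope_def_field, h0, sub_zero] at hx
  have hx2 : 0 < x - c := sub_pos.2 hxc
  rcases div_pos_iff.mp hx with ⟨h1, _⟩ | ⟨_, h2⟩
  · exact h1
  · linarith

lemma eventually_neg_left {L : ℝ → ℝ} {c d : ℝ} (h : HasDerivAt L d c) (hd : 0 < d)
    (h0 : L c = 0) : ∀ᶠ x in nhdsWithin c (Set.Iio c), L x < 0 := by
  have hs : Filter.Tendsto (slope L c) (nhdsWithin c {c}ᶜ) (nhds d) :=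
    hasDerivAt_iff_tendsto_slope.mp h
  have hev : ∀ᶠ x in nhdsWithin c {c}ᶜ, 0 < slope L c x :=
    hs.eventually (eventually_gt_nhds hd)
  have hmono : nhdsWithin c (Set.Iio c) ≤ nhdsWithin c {c}ᶜ :=
    nhdsWithin_mono c fun x hx => ne_of_lt hx
  filter_upwards [hmono hev, self_mem_nhdsWithin] with x hx hxc
  rw [slope_def_field, h0, sub_zero] at hx
  have hx2 : x - c < 0 := sub_neg.2 hxc
  rcases div_pos_iff.mp hx with ⟨_, h2⟩ | ⟨h1, _⟩
  · linarith
  · exact h1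

lemma no_two_zeros {L : ℝ → ℝ} {E E' : ℝ} (hlt : E < E')
    (hcont : ContinuousOn L (Set.Icc E E'))
    (hder : ∀ x ∈ Set.Icc E E', L x = 0 → ∃ d, 0 < d ∧ HasDerivAt L d x)
    (h0 : L E = 0) (h0' : L E' = 0) : False := by
  classical
  set T : Set ℝ := {x | x ∈ Set.Ico E E' ∧ L x = 0} with hT
  have hTmem : E ∈ T := ⟨⟨le_refl E, hlt⟩, h0⟩
  have hTne : T.Nonempty := ⟨E, hTmem⟩
  have hTbdd : BddAbove T := ⟨E', fun x hx => hx.1.2.le⟩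
  set c := sSup T with hc
  have hEc : E ≤ c := le_csSup hTbdd hTmem
  have hcE' : c ≤ E' := csSup_le hTne fun x hx => hx.1.2.le
  have hLc : L c = 0 ∧ c ∈ Set.Icc E E' := by
    have hsub : T ⊆ Set.Icc E E' ∩ L ⁻¹' {0} := fun x hx => ⟨⟨hx.1.1, hx.1.2.le⟩, hx.2⟩
    have hclosed : IsClosed (Set.Icc E E' ∩ L ⁻¹' {0}) :=
      hcont.preimage_isClosed_of_isClosed isClosed_Icc isClosed_singleton
    have hmem : c ∈ Set.Icc E E' ∩ L ⁻¹' {0} := by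
      have h1 : c ∈ closure T := csSup_mem_closure hTne hTbdd
      have h2 : closure T ⊆ Set.Icc E E' ∩ L ⁻¹' {0} := by
        rw [← hclosed.closure_eq]
        exact closure_mono hsub
      exact h2 h1
    exact ⟨hmem.2, hmem.1⟩
  obtain ⟨hLc0, hcmem⟩ := hLc
  obtain ⟨d', hd'pos, hd'⟩ := hder E' ⟨hlt.le, le_refl E'⟩ h0'
  have hneg := eventually_neg_left hd' hd'pos h0'
  obtain ⟨v, hv, hsubv⟩ := mem_nhdsLT_iff_exists_Ioo_subset.mp hneg
  rcases eq_or_lt_of_le hcE' with hce | hce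
  · have hmax : max v E < c := by rw [hce]; exact max_lt hv hlt
    obtain ⟨t, htT, hmt⟩ := exists_lt_of_lt_csSup hTne hmax
    have htneg : L t < 0 := hsubv ⟨lt_of_le_of_lt (le_max_left v E) hmt, htT.1.2⟩
    rw [htT.2] at htneg
    exact lt_irrefl 0 htneg
  · obtain ⟨d, hdpos, hd⟩ := hder c hcmem hLc0
    have hpos := eventually_pos_right hd hdpos hLc0
    obtain ⟨u, hu, hsubu⟩ := mem_nhdsGT_iff_exists_Ioo_subset.mp hpos
    have huc : c < u := hu
    have hminc : c < min u E' := lt_min huc hce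
    set x₁ := (c + min u E') / 2 with hx₁
    have hcx₁ : c < x₁ := by rw [hx₁]; linarith
    have hx₁min : x₁ < min u E' := by rw [hx₁]; linarith
    have hx₁u : x₁ < u := lt_of_lt_of_le hx₁min (min_le_left _ _)
    have hx₁E' : x₁ < E' := lt_of_lt_of_le hx₁min (min_le_right _ _)
    have hLx₁ : 0 < L x₁ := hsubu ⟨hcx₁, hx₁u⟩
    have h1 : max v x₁ < E' := max_lt hv hx₁E'
    set x₂ := (max v x₁ + E') / 2 with hx₂
    have hx₁x₂ : x₁ < x₂ := by
      have := le_max_right v x₁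
      rw [hx₂]; linarith
    have hx₂E' : x₂ < E' := by rw [hx₂]; linarith
    have hvx₂ : v < x₂ := by
      have := le_max_left v x₁
      rw [hx₂]; linarith
    have hLx₂ : L x₂ < 0 := hsubv ⟨hvx₂, hx₂E'⟩
    have hsub2 : Set.Icc x₁ x₂ ⊆ Set.Icc E E' := fun y hy =>
      ⟨le_trans hEc (le_trans hcx₁.le hy.1), le_trans hy.2 hx₂E'.le⟩
    have hivt := intermediate_value_Icc' hx₁x₂.le (hcont.mono hsub2)
    have h0mem : (0:ℝ) ∈ Set.Icc (L x₂) (L x₁) := ⟨hLx₂.le, hLx₁.le⟩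
    obtain ⟨z, hz, hLz⟩ := hivt h0mem
    have hzT : z ∈ T := ⟨⟨le_trans hEc (le_trans hcx₁.le hz.1), lt_of_le_of_lt hz.2 hx₂E'⟩, hLz⟩
    have hzc : z ≤ c := le_csSup hTbdd hzT
    linarith [lt_of_lt_of_le hcx₁ hz.1]

end Stmt7Aux

open Stmt7Aux

/-- For an Angelesco system and `ϰ₁ + ϰ₂ = 1`, the set `E_ϰ` of zeros of
`L = (ϰ₁/μ₁(ℝ))μ̂₁ + (ϰ₂/μ₂(ℝ))μ̂₂` in `ℝ ∖ (Δ₁ ∪ Δ₂)` contains at most one point, it is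
empty when `ϰ = (1,0)` or `ϰ = (0,1)`, and every `E ∈ E_ϰ` is a simple zero of `L`. -/
theorem stmt7
    (μ₁ μ₂ : Measure ℝ) [IsFiniteMeasure μ₁] [IsFiniteMeasure μ₂]
    (α₁ β₁ α₂ β₂ : ℝ)
    (hsupp1 : μ₁ (Set.Icc α₁ β₁)ᶜ = 0) (hsupp2 : μ₂ (Set.Icc α₂ β₂)ᶜ = 0)
    (hinf1 : (msupport μ₁).Infinite) (hinf2 : (msupport μ₂).Infinite)
    (hα₁ : α₁ ∈ msupport μ₁) (hβ₁ : β₁ ∈ msupport μ₁)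
    (hα₂ : α₂ ∈ msupport μ₂) (hβ₂ : β₂ ∈ msupport μ₂)
    (hsep : β₁ < α₂)
    (ϰ₁ ϰ₂ : ℝ) (hϰ : ϰ₁ + ϰ₂ = 1)
    (L : ℝ → ℝ)
    (hLdef : L = fun z => (ϰ₁ / (μ₁ Set.univ).toReal) * (∫ x, (z - x)⁻¹ ∂μ₁)
        + (ϰ₂ / (μ₂ Set.univ).toReal) * (∫ x, (z - x)⁻¹ ∂μ₂))
    (Eϰ : Set ℝ)
    (hEϰ : Eϰ = {E : ℝ | E ∉ Set.Icc α₁ β₁ ∪ Set.Icc α₂ β₂ ∧ L E = 0}) :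
    Eϰ.Subsingleton ∧
    ((ϰ₁ = 1 ∧ ϰ₂ = 0) ∨ (ϰ₁ = 0 ∧ ϰ₂ = 1) → Eϰ = ∅) ∧
    (∀ E ∈ Eϰ, ∃ d : ℝ, d ≠ 0 ∧ HasDerivAt L d E) := by
  subst hLdef
  subst hEϰ
  -- basic facts
  have hμ₁ne : μ₁ Set.univ ≠ 0 := hα₁ Set.univ Filter.univ_mem
  have hμ₂ne : μ₂ Set.univ ≠ 0 := hα₂ Set.univ Filter.univ_mem
  set m₁ := (μ₁ Set.univ).toReal with hm₁def
  set m₂ := (μ₂ Set.univ).toReal with hm₂def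
  have hm₁ : 0 < m₁ := ENNReal.toReal_pos hμ₁ne (measure_ne_top μ₁ _)
  have hm₂ : 0 < m₂ := ENNReal.toReal_pos hμ₂ne (measure_ne_top μ₂ _)
  have hαβ₁ : α₁ ≤ β₁ := by
    by_contra hcon
    push_neg at hcon
    have h1 : Set.Icc α₁ β₁ = ∅ := Set.Icc_eq_empty (not_le.2 hcon)
    rw [h1, Set.compl_empty] at hsupp1
    exact hμ₁ne hsupp1
  have hαβ₂ : α₂ ≤ β₂ := by
    by_contra hcon
    push_neg at hcon
    have h1 : Set.Icc α₂ β₂ = ∅ := Set.Icc_eq_empty (not_le.2 hcon)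
    rw [h1, Set.compl_empty] at hsupp2
    exact hμ₂ne hsupp2
  -- sides for any point off the hulls
  have hside : ∀ x : ℝ, x ∉ Set.Icc α₁ β₁ ∪ Set.Icc α₂ β₂ →
      (x < α₁ ∨ β₁ < x) ∧ (x < α₂ ∨ β₂ < x) := by
    intro x hx
    constructor
    · rcases lt_or_ge x α₁ with h | h
      · exact Or.inl h
      · right
        by_contra hcon
        push_neg at hcon
        exact hx (Or.inl ⟨h, hcon⟩)
    · rcases lt_or_ge x α₂ with h | h
      · exact Or.inl h
      · right
        by_contra hcon
        push_neg at hcon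
        exact hx (Or.inr ⟨h, hcon⟩)
  -- derivative of L everywhere off the hulls
  have hderiv_all : ∀ x : ℝ, x ∉ Set.Icc α₁ β₁ ∪ Set.Icc α₂ β₂ →
      HasDerivAt (fun z => (ϰ₁ / m₁) * (∫ y, (z - y)⁻¹ ∂μ₁)
        + (ϰ₂ / m₂) * (∫ y, (z - y)⁻¹ ∂μ₂))
        ((ϰ₁ / m₁) * (-∫ y, ((x - y) ^ 2)⁻¹ ∂μ₁)
          + (ϰ₂ / m₂) * (-∫ y, ((x - y) ^ 2)⁻¹ ∂μ₂)) x := by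
    intro x hx
    obtain ⟨hs1, hs2⟩ := hside x hx
    exact ((markov_facts hsupp1 hαβ₁ hs1).2.2.const_mul _).add
      ((markov_facts hsupp2 hαβ₂ hs2).2.2.const_mul _)
  -- classification of zeros
  have classify : ∀ E : ℝ, E ∈ {E : ℝ | E ∉ Set.Icc α₁ β₁ ∪ Set.Icc α₂ β₂ ∧
      (fun z => (ϰ₁ / m₁) * (∫ x, (z - x)⁻¹ ∂μ₁)
        + (ϰ₂ / m₂) * (∫ x, (z - x)⁻¹ ∂μ₂)) E = 0} →
      ∃ d : ℝ, HasDerivAt (fun z => (ϰ₁ / m₁) * (∫ x, (z - x)⁻¹ ∂μ₁)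
        + (ϰ₂ / m₂) * (∫ x, (z - x)⁻¹ ∂μ₂)) d E ∧
      ((β₁ < E ∧ E < α₂ ∧ 0 < ϰ₁ ∧ 0 < ϰ₂ ∧ d < 0) ∨
       (β₂ < E ∧ 0 < ϰ₁ ∧ ϰ₂ < 0 ∧ 0 < d) ∨
       (E < α₁ ∧ ϰ₁ < 0 ∧ 0 < ϰ₂ ∧ 0 < d)) := by
    intro E hE
    obtain ⟨hEout, hL0⟩ := hE
    simp only at hL0
    obtain ⟨hs1, hs2⟩ := hside E hEout
    set I₁ := ∫ x, (E - x)⁻¹ ∂μ₁ with hI₁def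
    set I₂ := ∫ x, (E - x)⁻¹ ∂μ₂ with hI₂def
    set J₁ := ∫ x, ((E - x) ^ 2)⁻¹ ∂μ₁ with hJ₁def
    set J₂ := ∫ x, ((E - x) ^ 2)⁻¹ ∂μ₂ with hJ₂def
    have hD := hderiv_all E hEout
    refine ⟨_, hD, ?_⟩
    obtain ⟨hI₁ge, hI₁le, _⟩ := markov_facts hsupp1 hαβ₁ hs1
    obtain ⟨hI₂ge, hI₂le, _⟩ := markov_facts hsupp2 hαβ₂ hs2
    rcases hs1 with hEl | hEr
    · -- E < α₁ : region "Λ" (left)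
      have hEl2 : E < α₂ := by linarith
      obtain ⟨hJ₁ge, _⟩ := sq_bounds_left hsupp1 hEl
      obtain ⟨_, hJ₂le⟩ := sq_bounds_left hsupp2 hEl2
      have hba : (E - β₁)⁻¹ < (E - α₂)⁻¹ :=
        inv_lt_inv_neg (by linarith) (by linarith)
      have halg := algebra_L hm₁ hm₂ hϰ hL0 hI₁le hI₂ge hI₂le hJ₁ge hJ₂le hba
        (inv_lt_zero.2 (by linarith : E - β₂ < 0)) (inv_lt_zero.2 (by linarith : E - α₂ < 0))
      exact Or.inr (Or.inr ⟨hEl, halg.1, halg.2.1, by linarith [halg.2.2]⟩)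
    · rcases hs2 with hEm | hER
      · -- β₁ < E < α₂ : gap
        obtain ⟨hJ₁ge, _⟩ := sq_bounds_right hsupp1 hEr
        obtain ⟨hJ₂ge, _⟩ := sq_bounds_left hsupp2 hEm
        have hI₁pos : 0 < I₁ := by
          have h1 : (0:ℝ) < m₁ * (E - α₁)⁻¹ :=
            mul_pos hm₁ (inv_pos.2 (by linarith : (0:ℝ) < E - α₁))
          linarith
        have hI₂neg : I₂ < 0 := by
          have h1 : m₂ * (E - β₂)⁻¹ < 0 :=
            mul_neg_of_pos_of_neg hm₂ (inv_lt_zero.2 (by linarith : E - β₂ < 0))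
          linarith
        have hJ₁pos : 0 < J₁ := by
          have h1 : (0:ℝ) < (E - α₁)⁻¹ * I₁ :=
            mul_pos (inv_pos.2 (by linarith : (0:ℝ) < E - α₁)) hI₁pos
          linarith
        have hJ₂pos : 0 < J₂ := by
          have h1 : (0:ℝ) < (E - β₂)⁻¹ * I₂ :=
            mul_pos_of_neg_of_neg (inv_lt_zero.2 (by linarith : E - β₂ < 0)) hI₂neg
          linarith
        have halg := algebra_M hm₁ hm₂ hϰ hL0 hI₁pos hI₂neg hJ₁pos hJ₂pos
        exact Or.inl ⟨hEr, hEm, halg.1, halg.2.1, by linarith [halg.2.2]⟩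
      · -- β₂ < E : region right
        have hEr1 : β₁ < E := by linarith
        obtain ⟨_, hJ₁le⟩ := sq_bounds_right hsupp1 hEr1
        obtain ⟨hJ₂ge, _⟩ := sq_bounds_right hsupp2 hER
        have hI₁pos : 0 < I₁ := by
          have h1 : (0:ℝ) < m₁ * (E - α₁)⁻¹ :=
            mul_pos hm₁ (inv_pos.2 (by linarith : (0:ℝ) < E - α₁))
          linarith
        have hba : (E - β₁)⁻¹ < (E - α₂)⁻¹ :=
          inv_strictAnti₀ (by linarith) (by linarith)
        have halg := algebra_R hm₁ hm₂ hϰ hL0 hI₁pos hI₁le hI₂ge hJ₁le hJ₂ge hba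
          (inv_pos.2 (by linarith : (0:ℝ) < E - β₁))
        exact Or.inr (Or.inl ⟨hER, halg.1, halg.2.1, by linarith [halg.2.2]⟩)
  -- continuity off the hulls
  have hcont_at : ∀ x : ℝ, x ∉ Set.Icc α₁ β₁ ∪ Set.Icc α₂ β₂ →
      ContinuousAt (fun z => (ϰ₁ / m₁) * (∫ x, (z - x)⁻¹ ∂μ₁)
        + (ϰ₂ / m₂) * (∫ x, (z - x)⁻¹ ∂μ₂)) x := by
    intro x hx
    exact (hderiv_all x hx).continuousAt
  refine ⟨?_, ?_, ?_⟩
  · -- subsingleton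
    have key2 : ∀ E E' : ℝ, E ∈ {E : ℝ | E ∉ Set.Icc α₁ β₁ ∪ Set.Icc α₂ β₂ ∧
        (fun z => (ϰ₁ / m₁) * (∫ x, (z - x)⁻¹ ∂μ₁)
          + (ϰ₂ / m₂) * (∫ x, (z - x)⁻¹ ∂μ₂)) E = 0} →
        E' ∈ {E : ℝ | E ∉ Set.Icc α₁ β₁ ∪ Set.Icc α₂ β₂ ∧
        (fun z => (ϰ₁ / m₁) * (∫ x, (z - x)⁻¹ ∂μ₁)
          + (ϰ₂ / m₂) * (∫ x, (z - x)⁻¹ ∂μ₂)) E = 0} →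
        E < E' → False := by
      intro E E' hE hE' hlt
      obtain ⟨dE, hDE, hCE⟩ := classify E hE
      obtain ⟨dE', hDE', hCE'⟩ := classify E' hE'
      -- membership of the interval in the common region
      rcases hCE with ⟨hg1, hg2, hk1, hk2, hdneg⟩ | ⟨hr1, hk1, hk2, hdpos⟩ |
          ⟨hl1, hk1, hk2, hdpos⟩
      · -- both in the gap
        rcases hCE' with ⟨hg1', hg2', _, _, _⟩ | ⟨_, _, hk2', _⟩ | ⟨_, hk1', _, _⟩
        · -- interval ⊆ gap
          have hmem : ∀ x ∈ Set.Icc E E', x ∉ Set.Icc α₁ β₁ ∪ Set.Icc α₂ β₂ := by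
            intro x hx hcon
            rcases hcon with h | h
            · exact absurd h.2 (by push_neg; linarith [hx.1])
            · exact absurd h.1 (by push_neg; linarith [hx.2])
          have hcont : ContinuousOn (fun z => -((ϰ₁ / m₁) * (∫ x, (z - x)⁻¹ ∂μ₁)
              + (ϰ₂ / m₂) * (∫ x, (z - x)⁻¹ ∂μ₂))) (Set.Icc E E') := fun x hx =>
            ((hcont_at x (hmem x hx)).neg).continuousWithinAt
          refine no_two_zeros hlt hcont ?_ (by simp only [neg_eq_zero]; exact hE.2) (by simp only [neg_eq_zero]; exact hE'.2)
          intro x hx hLx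
          have hx0 : (fun z => (ϰ₁ / m₁) * (∫ y, (z - y)⁻¹ ∂μ₁)
              + (ϰ₂ / m₂) * (∫ y, (z - y)⁻¹ ∂μ₂)) x = 0 := by
            simpa using (neg_eq_zero.mp hLx)
          obtain ⟨d, hDx, hCx⟩ := classify x ⟨hmem x hx, hx0⟩
          rcases hCx with ⟨_, _, _, _, hd⟩ | ⟨_, _, hk2'', _⟩ | ⟨_, hk1'', _, _⟩
          · exact ⟨-d, by linarith, hDx.neg⟩
          · linarith
          · linarith
        · linarith
        · linarith
      · -- both right of β₂
        rcases hCE' with ⟨_, _, _, hk2', _⟩ | ⟨hr1', _, _, _⟩ | ⟨_, hk1', _, _⟩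
        · linarith
        · have hmem : ∀ x ∈ Set.Icc E E', x ∉ Set.Icc α₁ β₁ ∪ Set.Icc α₂ β₂ := by
            intro x hx hcon
            rcases hcon with h | h
            · exact absurd h.2 (by push_neg; linarith [hx.1, hsep, hαβ₂])
            · exact absurd h.2 (by push_neg; linarith [hx.1])
          have hcont : ContinuousOn (fun z => (ϰ₁ / m₁) * (∫ x, (z - x)⁻¹ ∂μ₁)
              + (ϰ₂ / m₂) * (∫ x, (z - x)⁻¹ ∂μ₂)) (Set.Icc E E') := fun x hx =>
            (hcont_at x (hmem x hx)).continuousWithinAt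
          refine no_two_zeros hlt hcont ?_ hE.2 hE'.2
          intro x hx hLx
          obtain ⟨d, hDx, hCx⟩ := classify x ⟨hmem x hx, hLx⟩
          rcases hCx with ⟨_, _, _, hk2'', _⟩ | ⟨_, _, _, hd⟩ | ⟨_, hk1'', _, _⟩
          · linarith
          · exact ⟨d, hd, hDx⟩
          · linarith
        · linarith
      · -- both left of α₁
        rcases hCE' with ⟨_, _, hk1', _, _⟩ | ⟨_, hk1', _, _⟩ | ⟨hl1', _, _, _⟩
        · linarith
        · linarith
        · have hmem : ∀ x ∈ Set.Icc E E', x ∉ Set.Icc α₁ β₁ ∪ Set.Icc α₂ β₂ := by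
            intro x hx hcon
            rcases hcon with h | h
            · exact absurd h.1 (by push_neg; linarith [hx.2])
            · exact absurd h.1 (by push_neg; linarith [hx.2, hsep, hαβ₁])
          have hcont : ContinuousOn (fun z => (ϰ₁ / m₁) * (∫ x, (z - x)⁻¹ ∂μ₁)
              + (ϰ₂ / m₂) * (∫ x, (z - x)⁻¹ ∂μ₂)) (Set.Icc E E') := fun x hx =>
            (hcont_at x (hmem x hx)).continuousWithinAt
          refine no_two_zeros hlt hcont ?_ hE.2 hE'.2
          intro x hx hLx
          obtain ⟨d, hDx, hCx⟩ := classify x ⟨hmem x hx, hLx⟩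
          rcases hCx with ⟨_, _, _, hk2'', _⟩ | ⟨_, _, hk2'', _⟩ | ⟨_, _, _, hd⟩
          · linarith
          · linarith
          · exact ⟨d, hd, hDx⟩
    intro E hE E' hE'
    by_contra hne
    rcases lt_trichotomy E E' with h | h | h
    · exact key2 E E' hE hE' h
    · exact hne h
    · exact key2 E' E hE' hE h
  · -- emptiness for the pure cases
    intro hpure
    rw [Set.eq_empty_iff_forall_notMem]
    intro E hE
    obtain ⟨d, hD, hC⟩ := classify E hE
    rcases hpure with ⟨h1, h2⟩ | ⟨h1, h2⟩ <;>
      rcases hC with ⟨_, _, hk1, hk2, _⟩ | ⟨_, hk1, hk2, _⟩ | ⟨_, hk1, hk2, _⟩ <;> linarith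
  · -- simple zeros
    intro E hE
    obtain ⟨d, hD, hC⟩ := classify E hE
    refine ⟨d, ?_, hD⟩
    rcases hC with ⟨_, _, _, _, hd⟩ | ⟨_, _, _, hd⟩ | ⟨_, _, _, hd⟩
    · exact ne_of_lt hd
    · exact ne_of_gt hd
    · exact ne_of_gt hd
end

section
/- Let (μ₁, μ₂) be a Nikishin system with parameter measure τ, let τ_d be the dual measure of τ, let P_n be the monic type II multiple orthogonal polynomials with h_{n,j} = ∫ x^{n_j} P_n(x) dμ_j(x), and define the functions of the second kind R_{n,j}(z) = ∫ P_n(x) dμ_j(x)/(z − x) for j ∈ {1,2}. Then for every n = (n₁, n₂) with n₁, n₂ ≥ 0: (i) ∫ x^k R_{n,1}(x) dτ(x) = 0 for every integer k with 0 ≤ k ≤ min{n₁, n₂ − 1}; (ii) ∫ x^k R_{n,2}(x) dτ_d(x) = 0 for every integer k with 0 ≤ k ≤ min{n₁ − 1, n₂ − 2}; (iii) if n₂ ≤ n₁ then ∫ x^{n₂} R_{n,1}(x) dτ(x) = −h_{n,2}; (iv) if n₂ ≥ n₁ + 2 then ∫ x^{n₁} R_{n,2}(x) dτ_d(x) = h_{n,1};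 (v) if n₂ = n₁ + 1 then τ(ℝ) h_{n,1} − h_{n,2} = ∫ x^{n₂} R_{n,1}(x) dτ(x) = τ(ℝ) ∫ x^{n₁} R_{n,2}(x) dτ_d(x). -/
open MeasureTheory Filter Set
open scoped NNReal ENNReal

lemma ae_mem_of_compl {ν : Measure ℝ} {s : Set ℝ} (h : ν sᶜ = 0) :
    ∀ᵐ x ∂ν, x ∈ s := by
  rw [MeasureTheory.ae_iff]; simpa [Set.compl_def] using h

lemma ibdd {α : Type*} [MeasurableSpace α] {ν : Measure α} [IsFiniteMeasure ν] {f : α → ℝ}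
    (hm : AEStronglyMeasurable f ν) {C : ℝ} (h : ∀ᵐ x ∂ν, |f x| ≤ C) :
    Integrable f ν :=
  Integrable.mono' (integrable_const C) hm (by simpa [Real.norm_eq_abs] using h)

lemma abs_le_max_of_mem_Icc {c d y : ℝ} (hy : y ∈ Set.Icc c d) :
    |y| ≤ max |c| |d| := by
  rcases hy with ⟨h1, h2⟩
  cases' le_or_gt 0 y with h0 h0
  · calc |y| = y := abs_of_nonneg h0
      _ ≤ |d| := le_trans h2 (le_abs_self d)
      _ ≤ max |c| |d| := le_max_right _ _
  · calc |y| = -y := abs_of_neg h0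
      _ ≤ -c := by linarith
      _ ≤ |c| := neg_le_abs c
      _ ≤ max |c| |d| := le_max_left _ _

lemma integrable_pow_mul {μ : Measure ℝ} [IsFiniteMeasure μ] {c d : ℝ}
    (hμ : μ (Set.Icc c d)ᶜ = 0) {g : ℝ → ℝ} (hgm : AEStronglyMeasurable g μ)
    {Cg : ℝ} (hgb : ∀ᵐ y ∂μ, |g y| ≤ Cg) (m : ℕ) :
    Integrable (fun y => y ^ m * g y) μ := by
  refine ibdd (((measurable_id.pow_const m).aestronglyMeasurable).mul hgm)
    (C := (max |c| |d|) ^ m * Cg) ?_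
  filter_upwards [ae_mem_of_compl hμ, hgb] with y hy hgy
  calc |y ^ m * g y| = |y| ^ m * |g y| := by rw [abs_mul, abs_pow]
    _ ≤ (max |c| |d|) ^ m * Cg :=
        mul_le_mul (pow_le_pow_left₀ (abs_nonneg y) (abs_le_max_of_mem_Icc hy) m) hgy
          (abs_nonneg _) (pow_nonneg (le_trans (abs_nonneg c) (le_max_left _ _)) m)

lemma master (ν μ : Measure ℝ) [IsFiniteMeasure ν] [IsFiniteMeasure μ]
    (a b c d : ℝ) (hbc : b < c)
    (hν : ν (Set.Icc a b)ᶜ = 0) (hμ : μ (Set.Icc c d)ᶜ = 0)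
    (g : ℝ → ℝ) (hgm : Measurable g) (Cg : ℝ) (hgb : ∀ᵐ y ∂μ, |g y| ≤ Cg) (k : ℕ) :
    ∫ x, x ^ k * (∫ y, g y / (x - y) ∂μ) ∂ν
      = (∑ i ∈ Finset.range k,
          (∫ x, x ^ i ∂ν) * ∫ y, y ^ (k - 1 - i) * g y ∂μ)
        - ∫ y, (∫ x, (y - x)⁻¹ ∂ν) * (y ^ k * g y) ∂μ := by
  have haeν : ∀ᵐ x ∂ν, x ∈ Set.Icc a b := ae_mem_of_compl hν
  have haeμ : ∀ᵐ y ∂μ, y ∈ Set.Icc c d := ae_mem_of_compl hμ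
  have hD : (0:ℝ) < c - b := by linarith
  set M : ℝ := max |a| |b| with hM
  set N : ℝ := max |c| |d| with hN
  have hM0 : 0 ≤ M := le_trans (abs_nonneg a) (le_max_left _ _)
  have hN0 : 0 ≤ N := le_trans (abs_nonneg c) (le_max_left _ _)
  -- measurability of the big function
  have hFm : Measurable (fun p : ℝ × ℝ => p.1 ^ k * (g p.2 / (p.1 - p.2))) :=
    (measurable_fst.pow_const k).mul
      ((hgm.comp measurable_snd).div (measurable_fst.sub measurable_snd))
  -- a.e. (prod) membership
  have haeprod : ∀ᵐ p ∂(ν.prod μ), p.1 ∈ Set.Icc a b ∧ p.2 ∈ Set.Icc c d := by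
    rw [MeasureTheory.ae_iff]
    refine measure_mono_null (t := ((Set.Icc a b)ᶜ ×ˢ (Set.univ : Set ℝ)) ∪ (Set.univ ×ˢ (Set.Icc c d)ᶜ)) (fun p hp => ?_) ?_
    · simp only [Set.mem_setOf_eq, not_and_or] at hp
      rcases hp with h | h
      · exact Or.inl ⟨h, trivial⟩
      · exact Or.inr ⟨trivial, h⟩
    · refine le_antisymm (le_trans (measure_union_le _ _) ?_) (zero_le)
      rw [Measure.prod_prod, Measure.prod_prod, hν, hμ]
      simp
  -- integrability on the product
  have hgb' : ∀ᵐ p ∂(ν.prod μ), |g p.2| ≤ Cg := by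
    have : (ν.prod μ) {p : ℝ × ℝ | ¬ |g p.2| ≤ Cg} = 0 := by
      have h0 : μ {y : ℝ | ¬ |g y| ≤ Cg} = 0 := by
        rw [← MeasureTheory.ae_iff]; exact hgb
      have : {p : ℝ × ℝ | ¬ |g p.2| ≤ Cg}
          = (Set.univ : Set ℝ) ×ˢ {y : ℝ | ¬ |g y| ≤ Cg} := by
        ext p; simp [Set.mem_prod]
      rw [this, Measure.prod_prod, h0, mul_zero]
    rw [MeasureTheory.ae_iff]; exact this
  have hFint : Integrable (fun p : ℝ × ℝ => p.1 ^ k * (g p.2 / (p.1 - p.2))) (ν.prod μ) := by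
    refine ibdd hFm.aestronglyMeasurable (C := M ^ k * (c - b)⁻¹ * Cg) ?_
    filter_upwards [haeprod, hgb'] with p hp hgp
    obtain ⟨⟨hx1, hx2⟩, ⟨hy1, hy2⟩⟩ := hp
    have hsub : (0:ℝ) < p.2 - p.1 := by linarith
    have habs : |p.1 - p.2| = p.2 - p.1 := by rw [abs_sub_comm]; exact abs_of_pos hsub
    have hinv : |(p.1 - p.2)⁻¹| ≤ (c - b)⁻¹ := by
      rw [abs_inv, habs]
      exact inv_anti₀ hD (by linarith)
    calc |p.1 ^ k * (g p.2 / (p.1 - p.2))|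
        = (|p.1| ^ k * |(p.1 - p.2)⁻¹|) * |g p.2| := by
          rw [div_eq_mul_inv, abs_mul, abs_mul, abs_pow]; ring
      _ ≤ (M ^ k * (c - b)⁻¹) * Cg := by
          refine mul_le_mul ?_ hgp (abs_nonneg _) ?_
          · exact mul_le_mul (pow_le_pow_left₀ (abs_nonneg _) (abs_le_max_of_mem_Icc ⟨hx1, hx2⟩) k)
              hinv (abs_nonneg _) (pow_nonneg hM0 k)
          · positivity
      _ = M ^ k * (c - b)⁻¹ * Cg := by ring
  -- measurability of y ↦ ∫ x, (y-x)⁻¹ ∂ν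
  have hnuhatm : Measurable (fun y => ∫ x, (y - x)⁻¹ ∂ν) := by
    have h : StronglyMeasurable (fun p : ℝ × ℝ => (p.1 - p.2)⁻¹) :=
      ((measurable_fst.sub measurable_snd).inv).stronglyMeasurable
    exact h.integral_prod_right'.measurable
  set Cν : ℝ := (c - b)⁻¹ * (ν Set.univ).toReal with hCν
  have hCν0 : 0 ≤ Cν := by positivity
  have hnuhatb : ∀ᵐ y ∂μ, |∫ x, (y - x)⁻¹ ∂ν| ≤ Cν := by
    filter_upwards [haeμ] with y hy
    rw [← Real.norm_eq_abs, hCν]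
    refine norm_integral_le_of_norm_le_const ?_
    filter_upwards [haeν] with x hx
    rw [Real.norm_eq_abs, abs_inv, abs_of_pos (by rcases hx with ⟨_,h2⟩; rcases hy with ⟨h3,_⟩; linarith)]
    exact inv_anti₀ hD (by rcases hx with ⟨_,h2⟩; rcases hy with ⟨h3,_⟩; linarith)
  -- swap
  have swap : ∫ x, x ^ k * (∫ y, g y / (x - y) ∂μ) ∂ν
      = ∫ y, ∫ x, x ^ k * (g y / (x - y)) ∂ν ∂μ := by
    have : (fun x => x ^ k * (∫ y, g y / (x - y) ∂μ))
        = fun x => ∫ y, x ^ k * (g y / (x - y)) ∂μ := by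
      funext x; rw [integral_const_mul]
    rw [this]
    exact integral_integral_swap hFint
  -- inner integral evaluation
  have inner : ∀ᵐ y ∂μ, ∫ x, x ^ k * (g y / (x - y)) ∂ν
      = (∑ i ∈ Finset.range k, (∫ x, x ^ i ∂ν) * (y ^ (k - 1 - i) * g y))
        - (∫ x, (y - x)⁻¹ ∂ν) * (y ^ k * g y) := by
    filter_upwards [haeμ] with y hy
    have hptwise : ∀ᵐ x ∂ν, x ^ k * (g y / (x - y))
        = (∑ i ∈ Finset.range k, x ^ i * (y ^ (k - 1 - i) * g y))
          - (y - x)⁻¹ * (y ^ k * g y) := by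
      filter_upwards [haeν] with x hx
      have hlt : x < y := by rcases hx with ⟨_,h2⟩; rcases hy with ⟨h3,_⟩; linarith
      have hxy : x - y ≠ 0 := by linarith
      have e1 : x ^ k = (∑ i ∈ Finset.range k, x ^ i * y ^ (k - 1 - i)) * (x - y) + y ^ k := by
        rw [geom_sum₂_mul]; ring
      have e2 : (x - y)⁻¹ = -(y - x)⁻¹ := by
        rw [show x - y = -(y - x) by ring, inv_neg]
      calc x ^ k * (g y / (x - y)) = (x ^ k / (x - y)) * g y := by ring
        _ = ((∑ i ∈ Finset.range k, x ^ i * y ^ (k - 1 - i)) + y ^ k / (x - y)) * g y := by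
            rw [e1, add_div, mul_div_cancel_right₀ _ hxy]
        _ = (∑ i ∈ Finset.range k, x ^ i * y ^ (k - 1 - i)) * g y
              + (y ^ k / (x - y)) * g y := by ring
        _ = (∑ i ∈ Finset.range k, x ^ i * (y ^ (k - 1 - i) * g y))
              - (y - x)⁻¹ * (y ^ k * g y) := by
            rw [Finset.sum_mul]
            have e3 : y ^ k / (x - y) * g y = -((y - x)⁻¹ * (y ^ k * g y)) := by
              rw [div_eq_mul_inv, e2]; ring
            rw [e3, Finset.sum_congr rfl
              (fun i (_ : i ∈ Finset.range k) =>
                show x ^ i * y ^ (k - 1 - i) * g y = x ^ i * (y ^ (k - 1 - i) * g y) by ring)]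
            ring
    have h1 : ∀ i ∈ Finset.range k,
        Integrable (fun x => x ^ i * (y ^ (k - 1 - i) * g y)) ν := fun i _ =>
      integrable_pow_mul hν aestronglyMeasurable_const
        (ae_of_all _ fun x => le_refl |y ^ (k - 1 - i) * g y|) i
    have h2 : Integrable (fun x => (y - x)⁻¹ * (y ^ k * g y)) ν := by
      refine ibdd (((measurable_const.sub measurable_id).inv.mul
        measurable_const).aestronglyMeasurable) (C := (c - b)⁻¹ * |y ^ k * g y|) ?_
      filter_upwards [haeν] with x hx
      rw [abs_mul, abs_inv, abs_of_pos (by rcases hx with ⟨_,hh2⟩; rcases hy with ⟨h3,_⟩; linarith)]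
      refine mul_le_mul_of_nonneg_right ?_ (abs_nonneg _)
      exact inv_anti₀ hD (by rcases hx with ⟨_,hh2⟩; rcases hy with ⟨h3,_⟩; linarith)
    rw [integral_congr_ae hptwise, integral_sub (integrable_finset_sum _ h1) h2,
      integral_finset_sum _ h1]
    congr 1
    · exact Finset.sum_congr rfl fun i _ => integral_mul_const _ _
    · exact integral_mul_const _ _
  -- outer integral
  have hsumint : ∀ i ∈ Finset.range k,
      Integrable (fun y => (∫ x, x ^ i ∂ν) * (y ^ (k - 1 - i) * g y)) μ :=
    fun i _ => (integrable_pow_mul hμ hgm.aestronglyMeasurable hgb (k - 1 - i)).const_mul _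
  have hlastint : Integrable (fun y => (∫ x, (y - x)⁻¹ ∂ν) * (y ^ k * g y)) μ := by
    refine ((integrable_pow_mul hμ (hnuhatm.mul hgm).aestronglyMeasurable
      (Cg := Cν * Cg) ?_ k).congr (ae_of_all _ fun y => by simp only [Pi.mul_apply]; ring))
    filter_upwards [hnuhatb, hgb] with y h1 h2
    rw [Pi.mul_apply, abs_mul]
    exact mul_le_mul h1 h2 (abs_nonneg _) hCν0
  rw [swap, integral_congr_ae inner,
    integral_sub (integrable_finset_sum _ hsumint) hlastint,
    integral_finset_sum _ hsumint]
  congr 1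
  exact Finset.sum_congr rfl fun i _ => integral_const_mul _ _

/-- Orthogonality relations of the functions of the second kind of a Nikishin system
with respect to the parameter measure τ and its dual measure τ_d. -/
theorem stmt10
    (μ₁ τ : Measure ℝ) [IsFiniteMeasure μ₁] [IsFiniteMeasure τ]
    (aτ bτ a₁ b₁ : ℝ)
    (hcτ : τ (Set.Icc aτ bτ)ᶜ = 0) (hc₁ : μ₁ (Set.Icc a₁ b₁)ᶜ = 0)
    (hinfτ : (msupport τ).Infinite) (hinf₁ : (msupport μ₁).Infinite)
    (haτ : aτ ∈ msupport τ) (hbτ : bτ ∈ msupport τ)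
    (ha₁ : a₁ ∈ msupport μ₁) (hb₁ : b₁ ∈ msupport μ₁)
    (hsep : bτ < a₁)
    (μ₂ : Measure ℝ)
    (hμ₂ : μ₂ = μ₁.withDensity fun x => ENNReal.ofReal (∫ t, (x - t)⁻¹ ∂τ))
    (P : ℕ → ℕ → Polynomial ℝ)
    (hP : ∀ n₁ n₂ : ℕ, (P n₁ n₂).Monic ∧ (P n₁ n₂).natDegree = n₁ + n₂)
    (horth₁ : ∀ n₁ n₂ : ℕ, ∀ m < n₁, ∫ x, (P n₁ n₂).eval x * x ^ m ∂μ₁ = 0)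
    (horth₂ : ∀ n₁ n₂ : ℕ, ∀ m < n₂, ∫ x, (P n₁ n₂).eval x * x ^ m ∂μ₂ = 0)
    (h1 h2 : ℕ → ℕ → ℝ)
    (hh1 : ∀ n₁ n₂ : ℕ, h1 n₁ n₂ = ∫ x, x ^ n₁ * (P n₁ n₂).eval x ∂μ₁)
    (hh2 : ∀ n₁ n₂ : ℕ, h2 n₁ n₂ = ∫ x, x ^ n₂ * (P n₁ n₂).eval x ∂μ₂)
    (τd : Measure ℝ) [IsFiniteMeasure τd]
    (hcd : τd (Set.Icc aτ bτ)ᶜ = 0)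
    (hdual : ∀ z : ℝ, z ∉ Set.Icc aτ bτ →
      (∫ t, (z - t)⁻¹ ∂τ)⁻¹
        = z / (τ Set.univ).toReal - (∫ x, x ∂τ) / ((τ Set.univ).toReal) ^ 2
          - ∫ t, (z - t)⁻¹ ∂τd) :
    (∀ n₁ n₂ k : ℕ, k ≤ n₁ → k + 1 ≤ n₂ →
        ∫ x, x ^ k * (∫ y, (P n₁ n₂).eval y / (x - y) ∂μ₁) ∂τ = 0) ∧
    (∀ n₁ n₂ k : ℕ, k + 1 ≤ n₁ → k + 2 ≤ n₂ →
        ∫ x, x ^ k * (∫ y, (P n₁ n₂).eval y / (x - y) ∂μ₂) ∂τd = 0) ∧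
    (∀ n₁ n₂ : ℕ, n₂ ≤ n₁ →
        ∫ x, x ^ n₂ * (∫ y, (P n₁ n₂).eval y / (x - y) ∂μ₁) ∂τ = -h2 n₁ n₂) ∧
    (∀ n₁ n₂ : ℕ, n₁ + 2 ≤ n₂ →
        ∫ x, x ^ n₁ * (∫ y, (P n₁ n₂).eval y / (x - y) ∂μ₂) ∂τd = h1 n₁ n₂) ∧
    (∀ n₁ n₂ : ℕ, n₂ = n₁ + 1 →
        (τ Set.univ).toReal * h1 n₁ n₂ - h2 n₁ n₂
            = (∫ x, x ^ n₂ * (∫ y, (P n₁ n₂).eval y / (x - y) ∂μ₁) ∂τ) ∧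
        (∫ x, x ^ n₂ * (∫ y, (P n₁ n₂).eval y / (x - y) ∂μ₁) ∂τ)
            = (τ Set.univ).toReal
                * ∫ x, x ^ n₁ * (∫ y, (P n₁ n₂).eval y / (x - y) ∂μ₂) ∂τd) := by
  -- basic facts
  have haeμ₁ : ∀ᵐ y ∂μ₁, y ∈ Set.Icc a₁ b₁ := ae_mem_of_compl hc₁
  have haeτ : ∀ᵐ t ∂τ, t ∈ Set.Icc aτ bτ := ae_mem_of_compl hcτ
  have hDpos : (0:ℝ) < a₁ - bτ := by linarith
  have hm₀pos : 0 < (τ Set.univ).toReal :=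
    ENNReal.toReal_pos (haτ Set.univ Filter.univ_mem) (measure_ne_top τ _)
  have haτbτ : aτ ≤ bτ := by
    by_contra h
    have he : Set.Icc aτ bτ = ∅ := Set.Icc_eq_empty h
    rw [he, Set.compl_empty] at hcτ
    exact (haτ Set.univ Filter.univ_mem) hcτ
  have ha₁b₁ : a₁ ≤ b₁ := by
    by_contra h
    have he : Set.Icc a₁ b₁ = ∅ := Set.Icc_eq_empty h
    rw [he, Set.compl_empty] at hc₁
    exact (ha₁ Set.univ Filter.univ_mem) hc₁
  -- measurability of the Markov function of τ
  have hThatm : Measurable (fun y : ℝ => ∫ t, (y - t)⁻¹ ∂τ) := by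
    have h : StronglyMeasurable (fun p : ℝ × ℝ => (p.1 - p.2)⁻¹) :=
      ((measurable_fst.sub measurable_snd).inv).stronglyMeasurable
    exact h.integral_prod_right'.measurable
  -- positivity of the Markov function on [a₁, b₁]
  have hThat_pos : ∀ y ∈ Set.Icc a₁ b₁, 0 < ∫ t, (y - t)⁻¹ ∂τ := by
    intro y hy
    have hint : Integrable (fun t => (y - t)⁻¹) τ := by
      refine ibdd ((measurable_const.sub measurable_id).inv).aestronglyMeasurable
        (C := (a₁ - bτ)⁻¹) ?_
      filter_upwards [haeτ] with t ht
      rw [abs_inv, abs_of_pos (by rcases ht with ⟨_, h2⟩; rcases hy with ⟨h3, _⟩; linarith)]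
      exact inv_anti₀ hDpos (by rcases ht with ⟨_, h2⟩; rcases hy with ⟨h3, _⟩; linarith)
    have hlow : (τ Set.univ).toReal * (y - aτ)⁻¹ ≤ ∫ t, (y - t)⁻¹ ∂τ := by
      have h := integral_mono_ae (integrable_const ((y - aτ)⁻¹)) hint ?_
      · rwa [integral_const, smul_eq_mul] at h
      · filter_upwards [haeτ] with t ht
        exact inv_anti₀ (by rcases ht with ⟨_, h2⟩; rcases hy with ⟨h3, _⟩; linarith)
          (by rcases ht with ⟨h1', _⟩; linarith)
    refine lt_of_lt_of_le ?_ hlow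
    have : 0 < y - aτ := by rcases hy with ⟨h3, _⟩; linarith
    positivity
  have hThat_bd : ∀ᵐ y ∂μ₁, |∫ t, (y - t)⁻¹ ∂τ| ≤ (a₁ - bτ)⁻¹ * (τ Set.univ).toReal := by
    filter_upwards [haeμ₁] with y hy
    rw [← Real.norm_eq_abs]
    refine norm_integral_le_of_norm_le_const ?_
    filter_upwards [haeτ] with t ht
    rw [Real.norm_eq_abs, abs_inv,
      abs_of_pos (by rcases ht with ⟨_, h2⟩; rcases hy with ⟨h3, _⟩; linarith)]
    exact inv_anti₀ hDpos (by rcases ht with ⟨_, h2⟩; rcases hy with ⟨h3, _⟩; linarith)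
  have hCτ0 : 0 ≤ (a₁ - bτ)⁻¹ * (τ Set.univ).toReal := by positivity
  -- integration against μ₂ as weighted integration against μ₁
  have key : ∀ f : ℝ → ℝ, ∫ y, f y ∂μ₂ = ∫ y, (∫ t, (y - t)⁻¹ ∂τ) * f y ∂μ₁ := by
    intro f
    have hμ₂' : μ₂ = μ₁.withDensity fun x => (((∫ t, (x - t)⁻¹ ∂τ).toNNReal : ℝ≥0) : ℝ≥0∞) := by
      rw [hμ₂]; rfl
    rw [hμ₂', integral_withDensity_eq_integral_smul (hThatm.real_toNNReal)]
    refine integral_congr_ae ?_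
    filter_upwards [haeμ₁] with y hy
    rw [NNReal.smul_def, Real.coe_toNNReal _ (le_of_lt (hThat_pos y hy)), smul_eq_mul]
  -- polynomial bounds
  have hQb : ∀ q : Polynomial ℝ, ∃ C : ℝ, 0 ≤ C ∧ ∀ᵐ y ∂μ₁, |q.eval y| ≤ C := by
    intro q
    obtain ⟨C, hC⟩ := (isCompact_Icc (a := a₁) (b := b₁)).exists_bound_of_continuousOn
      (q.continuous.continuousOn)
    refine ⟨max C 0, le_max_right _ _, ?_⟩
    filter_upwards [haeμ₁] with y hy
    calc |q.eval y| = ‖q.eval y‖ := rfl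
      _ ≤ C := hC y hy
      _ ≤ max C 0 := le_max_left _ _
  -- moments
  have B0 : ∀ n₁ n₂ m : ℕ, m < n₁ → ∫ y, y ^ m * (P n₁ n₂).eval y ∂μ₁ = 0 := by
    intro n₁ n₂ m hm
    rw [← horth₁ n₁ n₂ m hm]
    exact integral_congr_ae (Filter.Eventually.of_forall fun y => mul_comm _ _)
  have A0 : ∀ n₁ n₂ m : ℕ, m < n₂ →
      ∫ y, y ^ m * ((P n₁ n₂).eval y * ∫ t, (y - t)⁻¹ ∂τ) ∂μ₁ = 0 := by
    intro n₁ n₂ m hm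
    have h := horth₂ n₁ n₂ m hm
    rw [key (fun y => (P n₁ n₂).eval y * y ^ m)] at h
    rw [← h]
    exact integral_congr_ae (Filter.Eventually.of_forall fun y => by ring)
  have hA1 : ∀ n₁ n₂ : ℕ, ∫ y, y ^ n₁ * (P n₁ n₂).eval y ∂μ₁ = h1 n₁ n₂ :=
    fun n₁ n₂ => (hh1 n₁ n₂).symm
  have hA2 : ∀ n₁ n₂ : ℕ,
      ∫ y, y ^ n₂ * ((P n₁ n₂).eval y * ∫ t, (y - t)⁻¹ ∂τ) ∂μ₁ = h2 n₁ n₂ := by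
    intro n₁ n₂
    rw [hh2, key (fun y => y ^ n₂ * (P n₁ n₂).eval y)]
    exact integral_congr_ae (Filter.Eventually.of_forall fun y => by ring)
  -- main formula for the τ-side
  have main1 : ∀ n₁ n₂ k : ℕ,
      ∫ x, x ^ k * (∫ y, (P n₁ n₂).eval y / (x - y) ∂μ₁) ∂τ
        = (∑ i ∈ Finset.range k,
            (∫ x, x ^ i ∂τ) * ∫ y, y ^ (k - 1 - i) * (P n₁ n₂).eval y ∂μ₁)
          - ∫ y, y ^ k * ((P n₁ n₂).eval y * ∫ t, (y - t)⁻¹ ∂τ) ∂μ₁ := by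
    intro n₁ n₂ k
    obtain ⟨C, hC0, hCb⟩ := hQb (P n₁ n₂)
    rw [master τ μ₁ aτ bτ a₁ b₁ hsep hcτ hc₁ (fun y => (P n₁ n₂).eval y)
      ((P n₁ n₂).continuous.measurable) C hCb k]
    congr 1
    exact integral_congr_ae (Filter.Eventually.of_forall fun y => by ring)
  -- main formula for the τd-side
  have main2 : ∀ n₁ n₂ k : ℕ,
      ∫ x, x ^ k * (∫ y, (P n₁ n₂).eval y / (x - y) ∂μ₂) ∂τd
        = (∑ i ∈ Finset.range k,
            (∫ x, x ^ i ∂τd) * ∫ y, y ^ (k - 1 - i) * ((P n₁ n₂).eval y * ∫ t, (y - t)⁻¹ ∂τ) ∂μ₁)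
          - (((τ Set.univ).toReal)⁻¹
                * ∫ y, y ^ (k + 1) * ((P n₁ n₂).eval y * ∫ t, (y - t)⁻¹ ∂τ) ∂μ₁
              - ((∫ x, x ∂τ) / ((τ Set.univ).toReal) ^ 2)
                * ∫ y, y ^ k * ((P n₁ n₂).eval y * ∫ t, (y - t)⁻¹ ∂τ) ∂μ₁
              - ∫ y, y ^ k * (P n₁ n₂).eval y ∂μ₁) := by
    intro n₁ n₂ k
    obtain ⟨C, hC0, hCb⟩ := hQb (P n₁ n₂)
    have hgm : Measurable (fun y => (P n₁ n₂).eval y * ∫ t, (y - t)⁻¹ ∂τ) :=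
      ((P n₁ n₂).continuous.measurable).mul hThatm
    have hgb : ∀ᵐ y ∂μ₁, |(P n₁ n₂).eval y * ∫ t, (y - t)⁻¹ ∂τ|
        ≤ C * ((a₁ - bτ)⁻¹ * (τ Set.univ).toReal) := by
      filter_upwards [hCb, hThat_bd] with y hy1 hy2
      rw [abs_mul]
      exact mul_le_mul hy1 hy2 (abs_nonneg _) hC0
    -- rewrite the inner μ₂-integral as a μ₁-integral
    have hinner : (fun x : ℝ => x ^ k * ∫ y, (P n₁ n₂).eval y / (x - y) ∂μ₂)
        = fun x : ℝ => x ^ k *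
            ∫ y, ((P n₁ n₂).eval y * ∫ t, (y - t)⁻¹ ∂τ) / (x - y) ∂μ₁ := by
      funext x
      rw [key (fun y => (P n₁ n₂).eval y / (x - y))]
      congr 1
      exact integral_congr_ae (Filter.Eventually.of_forall fun y => by ring)
    rw [hinner, master τd μ₁ aτ bτ a₁ b₁ hsep hcd hc₁
      (fun y => (P n₁ n₂).eval y * ∫ t, (y - t)⁻¹ ∂τ) hgm _ hgb k]
    congr 1
    -- evaluate the τd-Markov term via the duality relation
    have hcongr : ∀ᵐ y ∂μ₁,
        (∫ x, (y - x)⁻¹ ∂τd) * (y ^ k * ((P n₁ n₂).eval y * ∫ t, (y - t)⁻¹ ∂τ))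
          = ((τ Set.univ).toReal)⁻¹
              * (y ^ (k + 1) * ((P n₁ n₂).eval y * ∫ t, (y - t)⁻¹ ∂τ))
            - ((∫ x, x ∂τ) / ((τ Set.univ).toReal) ^ 2)
              * (y ^ k * ((P n₁ n₂).eval y * ∫ t, (y - t)⁻¹ ∂τ))
            - y ^ k * (P n₁ n₂).eval y := by
      filter_upwards [haeμ₁] with y hy
      have hnot : y ∉ Set.Icc aτ bτ := by
        intro h; rcases h with ⟨_, h2⟩; rcases hy with ⟨h3, _⟩; linarith
      have hd := hdual y hnot
      have hpos := hThat_pos y hy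
      have hτd : ∫ x, (y - x)⁻¹ ∂τd
          = y / (τ Set.univ).toReal - (∫ x, x ∂τ) / ((τ Set.univ).toReal) ^ 2
            - (∫ t, (y - t)⁻¹ ∂τ)⁻¹ := by linarith [hd]
      have hinv : (∫ t, (y - t)⁻¹ ∂τ)⁻¹ * (∫ t, (y - t)⁻¹ ∂τ) = 1 :=
        inv_mul_cancel₀ hpos.ne'
      rw [hτd]
      linear_combination (-(y ^ k * (P n₁ n₂).eval y)) * hinv
    have i1 : Integrable
        (fun y => ((τ Set.univ).toReal)⁻¹
          * (y ^ (k + 1) * ((P n₁ n₂).eval y * ∫ t, (y - t)⁻¹ ∂τ))) μ₁ :=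
      (integrable_pow_mul hc₁ hgm.aestronglyMeasurable hgb (k + 1)).const_mul _
    have i2 : Integrable
        (fun y => ((∫ x, x ∂τ) / ((τ Set.univ).toReal) ^ 2)
          * (y ^ k * ((P n₁ n₂).eval y * ∫ t, (y - t)⁻¹ ∂τ))) μ₁ :=
      (integrable_pow_mul hc₁ hgm.aestronglyMeasurable hgb k).const_mul _
    have i3 : Integrable (fun y => y ^ k * (P n₁ n₂).eval y) μ₁ :=
      integrable_pow_mul hc₁ ((P n₁ n₂).continuous.measurable).aestronglyMeasurable hCb k
    have e3 : ∫ y, (((τ Set.univ).toReal)⁻¹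
          * (y ^ (k + 1) * ((P n₁ n₂).eval y * ∫ t, (y - t)⁻¹ ∂τ))
        - ((∫ x, x ∂τ) / ((τ Set.univ).toReal) ^ 2)
          * (y ^ k * ((P n₁ n₂).eval y * ∫ t, (y - t)⁻¹ ∂τ))
        - y ^ k * (P n₁ n₂).eval y) ∂μ₁
        = (∫ y, (((τ Set.univ).toReal)⁻¹
            * (y ^ (k + 1) * ((P n₁ n₂).eval y * ∫ t, (y - t)⁻¹ ∂τ))
          - ((∫ x, x ∂τ) / ((τ Set.univ).toReal) ^ 2)
            * (y ^ k * ((P n₁ n₂).eval y * ∫ t, (y - t)⁻¹ ∂τ))) ∂μ₁)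
          - ∫ y, y ^ k * (P n₁ n₂).eval y ∂μ₁ := integral_sub (i1.sub i2) i3
    rw [integral_congr_ae hcongr, e3, integral_sub i1 i2, integral_const_mul, integral_const_mul]
  have hmom0 : ∫ x, (x : ℝ) ^ 0 ∂τ = (τ Set.univ).toReal := by
    simp [integral_const]; rfl
  refine ⟨?_, ?_, ?_, ?_, ?_⟩
  · -- (i)
    intro n₁ n₂ k hk1 hk2
    rw [main1 n₁ n₂ k, A0 n₁ n₂ k (by omega),
      Finset.sum_eq_zero fun i hi =>
        (by rw [B0 n₁ n₂ (k - 1 - i)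
          (by have := Finset.mem_range.mp hi; omega), mul_zero])]
    simp
  · -- (ii)
    intro n₁ n₂ k hk1 hk2
    rw [main2 n₁ n₂ k, A0 n₁ n₂ (k + 1) (by omega), A0 n₁ n₂ k (by omega),
      B0 n₁ n₂ k (by omega),
      Finset.sum_eq_zero fun i hi =>
        (by rw [A0 n₁ n₂ (k - 1 - i)
          (by have := Finset.mem_range.mp hi; omega), mul_zero])]
    simp
  · -- (iii)
    intro n₁ n₂ hn
    rw [main1 n₁ n₂ n₂, hA2 n₁ n₂,
      Finset.sum_eq_zero fun i hi =>
        (by rw [B0 n₁ n₂ (n₂ - 1 - i)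
          (by have := Finset.mem_range.mp hi; omega), mul_zero])]
    simp
  · -- (iv)
    intro n₁ n₂ hn
    rw [main2 n₁ n₂ n₁, A0 n₁ n₂ (n₁ + 1) (by omega), A0 n₁ n₂ n₁ (by omega),
      hA1 n₁ n₂,
      Finset.sum_eq_zero fun i hi =>
        (by rw [A0 n₁ n₂ (n₁ - 1 - i)
          (by have := Finset.mem_range.mp hi; omega), mul_zero])]
    simp
  · -- (v)
    intro n₁ n₂ hn
    subst hn
    have hsum1 : ∑ i ∈ Finset.range (n₁ + 1),
        (∫ x, x ^ i ∂τ) * ∫ y, y ^ (n₁ + 1 - 1 - i) * (P n₁ (n₁ + 1)).eval y ∂μ₁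
          = (τ Set.univ).toReal * h1 n₁ (n₁ + 1) := by
      rw [Finset.sum_eq_single_of_mem 0 (Finset.mem_range.mpr (Nat.succ_pos _))
        (fun i hi hne =>
          (by rw [B0 n₁ (n₁ + 1) (n₁ + 1 - 1 - i)
            (by have := Finset.mem_range.mp hi; omega), mul_zero]))]
      simp only [Nat.add_sub_cancel, Nat.sub_zero, hmom0, hA1 n₁ (n₁ + 1)]
    constructor
    · rw [main1 n₁ (n₁ + 1) (n₁ + 1), hA2 n₁ (n₁ + 1), hsum1]
    · rw [main1 n₁ (n₁ + 1) (n₁ + 1), hA2 n₁ (n₁ + 1), hsum1,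
        main2 n₁ (n₁ + 1) n₁, hA2 n₁ (n₁ + 1), A0 n₁ (n₁ + 1) n₁ (by omega),
        hA1 n₁ (n₁ + 1),
        Finset.sum_eq_zero fun i hi =>
          (by rw [A0 n₁ (n₁ + 1) (n₁ - 1 - i)
            (by have := Finset.mem_range.mp hi; omega), mul_zero])]
      field_simp
      ring
end
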